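/- arXiv:2012.02999 — 6 statements merged into one kernel-verified Lean document; each statement's English description precedes it below -/
import Mathlib

section
/- Let q_k(A) be the backtrack-downweighted walk count matrices for parameter θ. Then q_0(A) = I, q_1(A) = A, q_2(A) = A² − μD, and for every k ≥ 2 the four-term recurrence q_{k+1}(A) = q_k(A)·A + μ·q_{k−1}(A)·(μI − D) − μ²·q_{k−2}(A)·(A − S) holds, where μ = 1 − θ. -/
open Matrix Finset

open scoped Classical in
/-- Backtrack-downweighted walk count matrix: entry `(i,j)` is the sum over all walks
of length `k` from `i` to `j` of `θ ^ (number of backtracking steps)`. -/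
noncomputable def btdwCount {n : ℕ} (A : Matrix (Fin n) (Fin n) ℝ) (θ : ℝ) (k : ℕ) :
    Matrix (Fin n) (Fin n) ℝ :=
  Matrix.of fun i j =>
    ∑ w : Fin (k + 1) → Fin n,
      (let w' : ℕ → Fin n := fun s => w ⟨s % (k + 1), Nat.mod_lt s (Nat.succ_pos k)⟩
       if w' 0 = i ∧ w' k = j ∧ (∀ s ∈ Finset.range k, A (w' s) (w' (s + 1)) = 1)
       then θ ^ ((Finset.range (k - 1)).filter fun s => w' s = w' (s + 2)).card
       else 0)

/-- Diagonal matrix `D` with `d_{ii} = (A²)_{ii}`. -/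
noncomputable def degDiag {n : ℕ} (A : Matrix (Fin n) (Fin n) ℝ) : Matrix (Fin n) (Fin n) ℝ :=
  Matrix.diagonal fun i => (A * A) i i

/-- Matrix `S` with `s_{ij} = a_{ij} a_{ji}`. -/
noncomputable def recipMat {n : ℕ} (A : Matrix (Fin n) (Fin n) ℝ) : Matrix (Fin n) (Fin n) ℝ :=
  Matrix.of fun i j => A i j * A j i

namespace BTDWaux

variable {n : ℕ}

def wext {n k : ℕ} (w : Fin (k + 1) → Fin n) : ℕ → Fin n :=
  fun s => w ⟨s % (k + 1), Nat.mod_lt s (Nat.succ_pos k)⟩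

noncomputable def wwE (A : Matrix (Fin n) (Fin n) ℝ) (k : ℕ) (w : ℕ → Fin n) : ℝ :=
  ∏ s ∈ Finset.range k, A (w s) (w (s + 1))

noncomputable def wwB (θ : ℝ) (k : ℕ) (w : ℕ → Fin n) : ℝ :=
  ∏ s ∈ Finset.range (k - 1), (if w s = w (s + 2) then θ else 1)

noncomputable def WQ (A : Matrix (Fin n) (Fin n) ℝ) (θ : ℝ) (k : ℕ) (i j : Fin n) : ℝ :=
  ∑ w : Fin (k + 1) → Fin n,
    if wext w 0 = i ∧ wext w k = j then wwE A k (wext w) * wwB θ k (wext w) else 0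

noncomputable def WT (A : Matrix (Fin n) (Fin n) ℝ) (θ : ℝ) (k : ℕ) (i b c : Fin n) : ℝ :=
  ∑ w : Fin (k + 2) → Fin n,
    if wext w 0 = i ∧ wext w k = b ∧ wext w (k + 1) = c then
      wwE A (k + 1) (wext w) * wwB θ (k + 1) (wext w) else 0

lemma wext_eq {k : ℕ} (w : Fin (k + 1) → Fin n) (s : ℕ) (h : s < k + 1) :
    wext w s = w ⟨s, h⟩ := by
  simp [wext, Nat.mod_eq_of_lt h]

lemma wext_snoc_lt {k : ℕ} (v : Fin (k + 1) → Fin n) (c : Fin n) (s : ℕ) (h : s < k + 1) :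
    wext (Fin.snoc v c : Fin (k + 2) → Fin n) s = wext v s := by
  rw [wext_eq _ s (by omega), wext_eq _ s h]
  have : (⟨s, by omega⟩ : Fin (k + 2)) = Fin.castSucc ⟨s, h⟩ := rfl
  rw [this, Fin.snoc_castSucc]

lemma wext_snoc_last {k : ℕ} (v : Fin (k + 1) → Fin n) (c : Fin n) :
    wext (Fin.snoc v c : Fin (k + 2) → Fin n) (k + 1) = c := by
  rw [wext_eq _ (k + 1) (by omega)]
  have : (⟨k + 1, by omega⟩ : Fin (k + 2)) = Fin.last (k + 1) := rfl
  rw [this, Fin.snoc_last]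

lemma sum_snoc {α : Type*} [Fintype α] {N : ℕ} (F : (Fin (N + 1) → α) → ℝ) :
    ∑ w : Fin (N + 1) → α, F w = ∑ v : Fin N → α, ∑ c : α, F (Fin.snoc v c) := by
  classical
  let e : ((Fin N → α) × α) ≃ (Fin (N + 1) → α) :=
    { toFun := fun p => Fin.snoc p.1 p.2
      invFun := fun w => (Fin.init w, w (Fin.last N))
      left_inv := by intro p; simp
      right_inv := by intro w; simp }
  rw [← e.sum_comp]
  rw [Fintype.sum_prod_type]
  rfl

lemma sum_fun_one {α : Type*} [Fintype α] (F : (Fin 1 → α) → ℝ) :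
    ∑ w : Fin 1 → α, F w = ∑ x : α, F (fun _ => x) := by
  classical
  let e : α ≃ (Fin 1 → α) :=
    { toFun := fun x => fun _ => x
      invFun := fun w => w 0
      left_inv := by intro x; rfl
      right_inv := by intro w; funext s; rw [Subsingleton.elim s 0] }
  rw [← e.sum_comp]
  rfl

lemma pow_filter (S : Finset ℕ) (p : ℕ → Prop) [DecidablePred p] (θ : ℝ) :
    θ ^ (S.filter p).card = ∏ s ∈ S, if p s then θ else 1 := by
  rw [← Finset.prod_filter_mul_prod_filter_not S p]
  rw [Finset.prod_congr rfl (fun x hx => by simp [Finset.mem_filter] at hx; simp [hx.2] :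
        ∀ x ∈ S.filter p, (if p x then θ else 1) = θ)]
  rw [Finset.prod_const]
  rw [Finset.prod_eq_one (fun x hx => by simp [Finset.mem_filter] at hx; simp [hx.2])]
  ring

lemma sum_ite_mid (P : Prop) [Decidable P] (R : Prop) [Decidable R] (x : Fin n) (f : ℝ) :
    (∑ b : Fin n, if P ∧ x = b ∧ R then f else 0) = if P ∧ R then f else 0 := by
  rw [Finset.sum_eq_single x]
  · split_ifs with h1 h2 h2 <;> first | rfl | tauto
  · intro b _ hb
    rw [if_neg (fun h => hb h.2.1.symm)]
  · simp

lemma sum_ite_last3 (P Q : Prop) [Decidable P] [Decidable Q] (c : Fin n) (f : Fin n → ℝ) :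
    (∑ c' : Fin n, if P ∧ Q ∧ c' = c then f c' else 0) = if P ∧ Q then f c else 0 := by
  rw [Finset.sum_eq_single c]
  · split_ifs with h1 h2 h2 <;> first | rfl | tauto
  · intro b _ hb
    rw [if_neg (fun h => hb h.2.2)]
  · simp

variable (A : Matrix (Fin n) (Fin n) ℝ) (θ : ℝ)

lemma wwE_snoc (k : ℕ) (v : Fin (k + 2) → Fin n) (c : Fin n) :
    wwE A (k + 2) (wext (Fin.snoc v c : Fin (k + 3) → Fin n)) =
      wwE A (k + 1) (wext v) * A (wext v (k + 1)) c := by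
  rw [wwE, wwE, Finset.prod_range_succ]
  congr 1
  · apply Finset.prod_congr rfl
    intro s hs
    simp only [Finset.mem_range] at hs
    rw [wext_snoc_lt _ _ s (by omega), wext_snoc_lt _ _ (s + 1) (by omega)]
  · rw [wext_snoc_lt _ _ (k + 1) (by omega), wext_snoc_last]

lemma wwB_snoc (k : ℕ) (v : Fin (k + 2) → Fin n) (c : Fin n) :
    wwB θ (k + 2) (wext (Fin.snoc v c : Fin (k + 3) → Fin n)) =
      wwB θ (k + 1) (wext v) * (if wext v k = c then θ else 1) := by
  rw [wwB, wwB]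
  have h1 : k + 2 - 1 = k + 1 := rfl
  have h2 : k + 1 - 1 = k := rfl
  rw [h1, h2, Finset.prod_range_succ]
  congr 1
  · apply Finset.prod_congr rfl
    intro s hs
    simp only [Finset.mem_range] at hs
    rw [wext_snoc_lt _ _ s (by omega), wext_snoc_lt _ _ (s + 2) (by omega)]
  · rw [wext_snoc_lt _ _ k (by omega), wext_snoc_last]

lemma WTrec (k : ℕ) (i b c : Fin n) :
    WT A θ (k + 1) i b c =
      A b c * WQ A θ (k + 1) i b - (1 - θ) * (A b c * WT A θ k i c b) := by
  classical
  rw [WT, sum_snoc]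
  have step1 : ∀ v : Fin (k + 2) → Fin n,
      (∑ c' : Fin n, if wext (Fin.snoc v c' : Fin (k + 3) → Fin n) 0 = i ∧
          wext (Fin.snoc v c' : Fin (k + 3) → Fin n) (k + 1) = b ∧
          wext (Fin.snoc v c' : Fin (k + 3) → Fin n) (k + 1 + 1) = c then
          wwE A (k + 1 + 1) (wext (Fin.snoc v c' : Fin (k + 3) → Fin n)) *
            wwB θ (k + 1 + 1) (wext (Fin.snoc v c' : Fin (k + 3) → Fin n)) else 0) =
      if wext v 0 = i ∧ wext v (k + 1) = b then
        (wwE A (k + 1) (wext v) * A (wext v (k + 1)) c) *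
          (wwB θ (k + 1) (wext v) * (if wext v k = c then θ else 1)) else 0 := by
    intro v
    have e0 : ∀ c' : Fin n, wext (Fin.snoc v c' : Fin (k + 3) → Fin n) 0 = wext v 0 :=
      fun c' => wext_snoc_lt v c' 0 (by omega)
    have e1 : ∀ c' : Fin n, wext (Fin.snoc v c' : Fin (k + 3) → Fin n) (k + 1) = wext v (k + 1) :=
      fun c' => wext_snoc_lt v c' (k + 1) (by omega)
    have e2 : ∀ c' : Fin n, wext (Fin.snoc v c' : Fin (k + 3) → Fin n) (k + 1 + 1) = c' :=
      fun c' => wext_snoc_last v c'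
    calc (∑ c' : Fin n, if wext (Fin.snoc v c' : Fin (k + 3) → Fin n) 0 = i ∧
          wext (Fin.snoc v c' : Fin (k + 3) → Fin n) (k + 1) = b ∧
          wext (Fin.snoc v c' : Fin (k + 3) → Fin n) (k + 1 + 1) = c then
          wwE A (k + 1 + 1) (wext (Fin.snoc v c' : Fin (k + 3) → Fin n)) *
            wwB θ (k + 1 + 1) (wext (Fin.snoc v c' : Fin (k + 3) → Fin n)) else 0)
        = ∑ c' : Fin n, if wext v 0 = i ∧ wext v (k + 1) = b ∧ c' = c then
            (wwE A (k + 1) (wext v) * A (wext v (k + 1)) c') *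
              (wwB θ (k + 1) (wext v) * (if wext v k = c' then θ else 1)) else 0 := by
          apply Finset.sum_congr rfl
          intro c' _
          rw [e0, e1, e2]
          apply if_congr Iff.rfl _ rfl
          rw [wwE_snoc, wwB_snoc]
      _ = _ := by
          rw [sum_ite_last3]
  rw [Finset.sum_congr rfl (fun v _ => step1 v)]
  rw [WQ, Finset.mul_sum, WT, Finset.mul_sum, Finset.mul_sum, ← Finset.sum_sub_distrib]
  apply Finset.sum_congr rfl
  intro v _
  by_cases hP : wext v 0 = i ∧ wext v (k + 1) = b
  · obtain ⟨h1, h2⟩ := hP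
    subst h1; subst h2
    by_cases hc : wext v k = c
    · subst hc
      simp only [and_self, if_true, true_and, if_pos rfl]
      ring
    · simp only [hc, and_self, if_true, true_and, and_false, false_and, if_false, if_pos rfl,
        if_neg hc]
      ring
  · have hP' : ¬(wext v 0 = i ∧ wext v k = c ∧ wext v (k + 1) = b) := fun h => hP ⟨h.1, h.2.2⟩
    rw [if_neg hP, if_neg hP, if_neg hP']
    ring

lemma qsplit (k : ℕ) (i j : Fin n) : WQ A θ (k + 1) i j = ∑ b, WT A θ k i b j := by
  classical
  simp only [WT]
  rw [Finset.sum_comm, WQ]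
  apply Finset.sum_congr rfl
  intro w _
  exact (sum_ite_mid (wext w 0 = i) (wext w (k + 1) = j) (wext w k)
    (wwE A (k + 1) (wext w) * wwB θ (k + 1) (wext w))).symm ▸ rfl

lemma WT0 (i b c : Fin n) : WT A θ 0 i b c = if b = i then A b c else 0 := by
  classical
  rw [WT, sum_snoc]
  have step : ∀ v : Fin 1 → Fin n, ∀ c' : Fin n,
      (if wext (Fin.snoc v c' : Fin 2 → Fin n) 0 = i ∧
          wext (Fin.snoc v c' : Fin 2 → Fin n) 0 = b ∧
          wext (Fin.snoc v c' : Fin 2 → Fin n) (0 + 1) = c then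
        wwE A (0 + 1) (wext (Fin.snoc v c' : Fin 2 → Fin n)) *
          wwB θ (0 + 1) (wext (Fin.snoc v c' : Fin 2 → Fin n)) else 0) =
      (if wext v 0 = i ∧ wext v 0 = b ∧ c' = c then A (wext v 0) c' else 0) := by
    intro v c'
    have e0 := wext_snoc_lt v c' 0 (by omega)
    have e1 := wext_snoc_last v c'
    rw [e0, e1]
    apply if_congr Iff.rfl _ rfl
    rw [wwE, wwB]
    simp only [Finset.prod_range_one, Nat.zero_add]
    rw [e0, e1]
    norm_num
  rw [Finset.sum_congr rfl (fun v _ => Finset.sum_congr rfl (fun c' _ => step v c'))]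
  rw [Finset.sum_congr rfl (fun v _ => sum_ite_last3 (wext v 0 = i) (wext v 0 = b) c
    (fun c' => A (wext v 0) c'))]
  rw [sum_fun_one (fun v => if wext v 0 = i ∧ wext v 0 = b then A (wext v 0) c else 0)]
  have hx : ∀ x : Fin n, wext (fun _ : Fin 1 => x) 0 = x := fun x => rfl
  simp only [hx]
  by_cases hbi : b = i
  · subst hbi
    rw [Finset.sum_eq_single b]
    · simp
    · intro x _ hxb
      rw [if_neg (fun h => hxb h.2)]
    · simp
  · rw [if_neg hbi]
    apply Finset.sum_eq_zero
    intro x _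
    rw [if_neg (fun h => hbi (h.2.symm.trans h.1))]

lemma WQ0 (i j : Fin n) : WQ A θ 0 i j = if i = j then 1 else 0 := by
  classical
  rw [WQ, sum_fun_one]
  have hx : ∀ x : Fin n, wext (fun _ : Fin 1 => x) 0 = x := fun x => rfl
  have hval : ∀ x : Fin n, wwE A 0 (wext (fun _ : Fin 1 => x)) *
      wwB θ 0 (wext (fun _ : Fin 1 => x)) = 1 := by
    intro x
    rw [wwE, wwB]
    simp
  simp only [hx, hval]
  by_cases hij : i = j
  · subst hij
    rw [Finset.sum_eq_single i]
    · simp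
    · intro x _ hxi
      rw [if_neg (fun h => hxi h.1)]
    · simp
  · rw [if_neg hij]
    apply Finset.sum_eq_zero
    intro x _
    rw [if_neg (fun h => hij (h.1.symm.trans h.2))]

lemma WQ1 (i j : Fin n) : WQ A θ 1 i j = A i j := by
  classical
  rw [show (1 : ℕ) = 0 + 1 from rfl, qsplit]
  simp only [WT0]
  rw [Finset.sum_eq_single i]
  · simp
  · intro x _ hxi
    rw [if_neg hxi]
  · simp

lemma absorb (hA01 : ∀ i j, A i j = 0 ∨ A i j = 1) (m : ℕ) (i c b : Fin n) :
    A c b * WT A θ m i c b = WT A θ m i c b := by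
  classical
  rw [WT, Finset.mul_sum]
  apply Finset.sum_congr rfl
  intro w _
  by_cases h : wext w 0 = i ∧ wext w m = c ∧ wext w (m + 1) = b
  · rw [if_pos h]
    have hE : wwE A (m + 1) (wext w) = wwE A m (wext w) * A c b := by
      rw [wwE, wwE, Finset.prod_range_succ, h.2.1, h.2.2]
    rw [hE]
    rcases hA01 c b with h0 | h1
    · rw [h0]; ring
    · rw [h1]; ring
  · rw [if_neg h, mul_zero]

lemma E1 (k : ℕ) (i c : Fin n) :
    WQ A θ (k + 2) i c = (∑ b, WQ A θ (k + 1) i b * A b c)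
      - (1 - θ) * ∑ b, A b c * WT A θ k i c b := by
  rw [show k + 2 = (k + 1) + 1 from rfl, qsplit]
  rw [Finset.sum_congr rfl (fun b _ => WTrec A θ k i b c)]
  rw [Finset.sum_sub_distrib]
  congr 1
  · exact Finset.sum_congr rfl (fun b _ => mul_comm _ _)
  · rw [Finset.mul_sum]

lemma Rform (m : ℕ) (i c : Fin n) :
    ∑ b, A b c * WT A θ (m + 1) i c b =
      WQ A θ (m + 1) i c * ((A * A) c c)
        - (1 - θ) * ∑ b, (A b c * A c b) * WT A θ m i b c := by
  have step : ∀ b, A b c * WT A θ (m + 1) i c b =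
      (A b c * A c b) * WQ A θ (m + 1) i c - (1 - θ) * ((A b c * A c b) * WT A θ m i b c) := by
    intro b
    rw [WTrec A θ m i c b]
    ring
  rw [Finset.sum_congr rfl (fun b _ => step b), Finset.sum_sub_distrib]
  congr 1
  · rw [← Finset.sum_mul, mul_comm]
    congr 1
    rw [Matrix.mul_apply]
    exact Finset.sum_congr rfl (fun b _ => mul_comm _ _)
  · rw [Finset.mul_sum]

lemma Uform (hA01 : ∀ i j, A i j = 0 ∨ A i j = 1) (m : ℕ) (i c : Fin n) :
    ∑ b, (A b c * A c b) * WT A θ m i b c =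
      (∑ b, WQ A θ m i b * (A b c * A c b))
        - ((∑ b, WQ A θ m i b * A b c) - WQ A θ (m + 1) i c) := by
  classical
  cases m with
  | zero =>
    simp only [Nat.zero_add, WT0, WQ0, WQ1]
    have L : ∑ b, (A b c * A c b) * (if b = i then A b c else 0) = (A i c * A c i) * A i c := by
      rw [Finset.sum_eq_single i]
      · simp
      · intro x _ hx; rw [if_neg hx, mul_zero]
      · simp
    have R1 : ∑ b, (if i = b then (1 : ℝ) else 0) * (A b c * A c b) = A i c * A c i := by
      rw [Finset.sum_eq_single i]
      · simp
      · intro x _ hx; rw [if_neg (fun h => hx h.symm), zero_mul]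
      · simp
    have R2 : ∑ b, (if i = b then (1 : ℝ) else 0) * A b c = A i c := by
      rw [Finset.sum_eq_single i]
      · simp
      · intro x _ hx; rw [if_neg (fun h => hx h.symm), zero_mul]
      · simp
    rw [L, R1, R2]
    rcases hA01 i c with h | h <;> rw [h] <;> ring
  | succ m =>
    have step : ∀ b, (A b c * A c b) * WT A θ (m + 1) i b c =
        WQ A θ (m + 1) i b * (A b c * A c b) - (1 - θ) * (A b c * WT A θ m i c b) := by
      intro b
      rw [WTrec A θ m i b c]
      have habs := absorb A θ hA01 m i c b
      rcases hA01 b c with h | h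
      · rw [h]; ring
      · rw [h]; linear_combination (θ - 1) * habs
    rw [Finset.sum_congr rfl (fun b _ => step b), Finset.sum_sub_distrib]
    congr 1
    rw [← Finset.mul_sum]
    have hE1 := E1 A θ m i c
    linarith

lemma WQ2 (hA01 : ∀ i j, A i j = 0 ∨ A i j = 1) (i j : Fin n) :
    WQ A θ 2 i j = (A * A) i j - (1 - θ) * (if i = j then (A * A) i j else 0) := by
  classical
  rw [show (2 : ℕ) = 0 + 2 from rfl, E1 A θ 0 i j]
  simp only [Nat.zero_add, WQ1, WT0]
  have key : (∑ b, A b j * if j = i then A j b else 0) =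
      (if i = j then (A * A) i j else 0) := by
    by_cases hij : i = j
    · subst hij
      rw [if_pos rfl, Matrix.mul_apply]
      apply Finset.sum_congr rfl
      intro b _
      rw [if_pos rfl, mul_comm]
    · rw [if_neg hij]
      apply Finset.sum_eq_zero
      intro b _
      rw [if_neg (fun h => hij (h.symm)), mul_zero]
  rw [key, Matrix.mul_apply]


lemma conv (hA01 : ∀ i j, A i j = 0 ∨ A i j = 1) (k : ℕ) (i j : Fin n) :
    btdwCount A θ k i j = WQ A θ k i j := by
  classical
  simp only [btdwCount, Matrix.of_apply, WQ, wext, wwE, wwB]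
  apply Finset.sum_congr rfl
  intro w _
  split_ifs with h1 h2 h2
  · have hE1 : (∏ s ∈ Finset.range k,
        A (w ⟨s % (k + 1), Nat.mod_lt s (Nat.succ_pos k)⟩)
          (w ⟨(s + 1) % (k + 1), Nat.mod_lt (s + 1) (Nat.succ_pos k)⟩)) = 1 :=
      Finset.prod_eq_one (fun s hs => h1.2.2 s hs)
    rw [hE1, one_mul, pow_filter]
    exact (if_pos h2).symm
  · exact absurd ⟨h1.1, h1.2.1⟩ h2
  · have hE : ¬(∀ s ∈ Finset.range k,
        A (w ⟨s % (k + 1), Nat.mod_lt s (Nat.succ_pos k)⟩)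
          (w ⟨(s + 1) % (k + 1), Nat.mod_lt (s + 1) (Nat.succ_pos k)⟩) = 1) :=
      fun e => h1 ⟨h2.1, h2.2, e⟩
    push_neg at hE
    obtain ⟨s, hs, hne⟩ := hE
    have h0 := (hA01 _ _).resolve_right hne
    rw [Finset.prod_eq_zero hs h0, zero_mul]
    exact (if_pos h2).symm
  · exact (if_neg h2).symm

lemma final (hA01 : ∀ i j, A i j = 0 ∨ A i j = 1) (m : ℕ) (i c : Fin n) :
    WQ A θ (m + 3) i c =
      (∑ b, WQ A θ (m + 2) i b * A b c)
        + (1 - θ) * (WQ A θ (m + 1) i c * ((1 - θ) - (A * A) c c))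
        - (1 - θ) ^ 2 * ((∑ b, WQ A θ m i b * A b c)
            - ∑ b, WQ A θ m i b * (A b c * A c b)) := by
  rw [show m + 3 = (m + 1) + 2 from rfl, E1 A θ (m + 1) i c]
  rw [Rform A θ m i c, Uform A θ hA01 m i c]
  ring

end BTDWaux

open BTDWaux in
/-- Theorem 3.1 (four-term recurrence for backtrack-downweighted walk counts,
right-sided version). -/
theorem btdw_recurrence {n : ℕ} (hn : 1 ≤ n) (A : Matrix (Fin n) (Fin n) ℝ)
    (hA01 : ∀ i j, A i j = 0 ∨ A i j = 1) (hAdiag : ∀ i, A i i = 0)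
    (θ : ℝ) (hθ0 : 0 ≤ θ) (hθ1 : θ ≤ 1) (μ : ℝ) (hμ : μ = 1 - θ) :
    btdwCount A θ 0 = 1 ∧
    btdwCount A θ 1 = A ∧
    btdwCount A θ 2 = A * A - μ • degDiag A ∧
    ∀ k, 2 ≤ k →
      btdwCount A θ (k + 1) =
        btdwCount A θ k * A + μ • (btdwCount A θ (k - 1) * (μ • 1 - degDiag A)) -
          μ ^ 2 • (btdwCount A θ (k - 2) * (A - recipMat A)) := by
  classical
  subst hμ
  refine ⟨?_, ?_, ?_, ?_⟩
  · ext i j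
    rw [conv A θ hA01 0 i j, WQ0, Matrix.one_apply]
  · ext i j
    rw [conv A θ hA01 1 i j, WQ1]
  · ext i j
    rw [conv A θ hA01 2 i j, WQ2 A θ hA01 i j]
    rw [Matrix.sub_apply, Matrix.smul_apply, smul_eq_mul, degDiag, Matrix.diagonal_apply]
    by_cases hij : i = j
    · subst hij
      rw [if_pos rfl]
    · rw [if_neg hij, if_neg hij]
  · intro k hk
    obtain ⟨m, rfl⟩ : ∃ m, k = m + 2 := ⟨k - 2, by omega⟩
    rw [show m + 2 - 1 = m + 1 from rfl, show m + 2 - 2 = m from rfl]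
    ext i c
    simp only [Matrix.add_apply, Matrix.sub_apply, Matrix.smul_apply, smul_eq_mul,
      Matrix.mul_apply, Matrix.one_apply, degDiag, recipMat, Matrix.diagonal_apply,
      Matrix.of_apply, conv A θ hA01]
    have mid : (∑ b, WQ A θ (m + 1) i b *
        ((1 - θ) * (if b = c then (1 : ℝ) else 0)
          - (if b = c then ∑ x, A b x * A x b else 0))) =
        WQ A θ (m + 1) i c * ((1 - θ) - ∑ x, A c x * A x c) := by
      rw [Finset.sum_eq_single c]
      · rw [if_pos rfl, if_pos rfl]; ring
      · intro b _ hbc; rw [if_neg hbc, if_neg hbc]; ring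
      · simp
    have lastS : (∑ b, WQ A θ m i b * (A b c - A b c * A c b)) =
        (∑ b, WQ A θ m i b * A b c) - ∑ b, WQ A θ m i b * (A b c * A c b) := by
      rw [← Finset.sum_sub_distrib]
      apply Finset.sum_congr rfl
      intro b _
      ring
    have hfin := final A θ hA01 m i c
    rw [Matrix.mul_apply] at hfin
    rw [show m + 2 + 1 = m + 3 from rfl]
    rw [mid, lastS, hfin]
end

section
/- Let q_k(A) be the backtrack-downweighted walk count matrices for parameter θ. Then for every k ≥ 2 the left-sided four-term recurrence q_{k+1}(A) = A·q_k(A) + μ·(μI − D)·q_{k−1}(A) − μ²·(A − S)·q_{k−2}(A) holds, where μ = 1 − θ. -/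
open Matrix Finset

namespace BTDW
open scoped Classical

variable {n : ℕ} (A : Matrix (Fin n) (Fin n) ℝ) (θ : ℝ)

/-- The periodic extension used in the statement. -/
def uu (k : ℕ) (w : Fin (k + 1) → Fin n) : ℕ → Fin n :=
  fun s => w ⟨s % (k + 1), Nat.mod_lt s (Nat.succ_pos k)⟩

lemma uu_eq (k : ℕ) (w : Fin (k + 1) → Fin n) (s : ℕ) (hs : s ≤ k) :
    uu k w s = w ⟨s, by omega⟩ := by
  simp only [uu]
  congr 1
  exact Fin.ext (Nat.mod_eq_of_lt (by omega))

/-- Product-form weight of a walk of length `k`. -/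
noncomputable def wt (k : ℕ) (u : ℕ → Fin n) : ℝ :=
  (∏ s ∈ Finset.range k, A (u s) (u (s + 1))) *
    ∏ s ∈ Finset.range (k - 1), (if u s = u (s + 2) then θ else 1)

lemma wt_congr {k : ℕ} {u v : ℕ → Fin n} (h : ∀ s ≤ k, u s = v s) :
    wt A θ k u = wt A θ k v := by
  unfold wt
  congr 1
  · exact Finset.prod_congr rfl fun s hs => by
      rw [h s (by simpa using Nat.le_of_lt_succ (Nat.lt_succ_of_lt (mem_range.mp hs))),
        h (s+1) (by have := mem_range.mp hs; omega)]
  · exact Finset.prod_congr rfl fun s hs => by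
      have hs' := mem_range.mp hs
      rw [h s (by omega), h (s+2) (by omega)]

lemma wt_spec (hA01 : ∀ i j, A i j = 0 ∨ A i j = 1) (k : ℕ) (u : ℕ → Fin n) :
    (if ∀ s ∈ Finset.range k, A (u s) (u (s + 1)) = 1
      then θ ^ ((Finset.range (k - 1)).filter fun s => u s = u (s + 2)).card
      else 0) = wt A θ k u := by
  unfold wt
  by_cases h : ∀ s ∈ Finset.range k, A (u s) (u (s + 1)) = 1
  · rw [if_pos h]
    have h1 : (∏ s ∈ Finset.range k, A (u s) (u (s + 1))) = 1 :=
      Finset.prod_eq_one h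
    rw [h1, one_mul, ← Finset.prod_filter, Finset.prod_const]
  · rw [if_neg h]
    push_neg at h
    obtain ⟨s, hs, hne⟩ := h
    have h0 : A (u s) (u (s + 1)) = 0 := (hA01 _ _).resolve_right hne
    rw [Finset.prod_eq_zero hs h0, zero_mul]

lemma btdw_apply (hA01 : ∀ i j, A i j = 0 ∨ A i j = 1) (k : ℕ) (i j : Fin n) :
    btdwCount A θ k i j =
      ∑ w : Fin (k + 1) → Fin n,
        if uu k w 0 = i ∧ uu k w k = j then wt A θ k (uu k w) else 0 := by
  show (Matrix.of _ : Matrix (Fin n) (Fin n) ℝ) i j = _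
  rw [Matrix.of_apply]
  apply Finset.sum_congr rfl
  intro w _
  simp only []
  by_cases hij : uu k w 0 = i ∧ uu k w k = j
  · rw [if_pos hij, ← wt_spec A θ hA01 k (uu k w)]
    by_cases hst : ∀ s ∈ Finset.range k, A (uu k w s) (uu k w (s + 1)) = 1
    · rw [if_pos ⟨hij.1, hij.2, hst⟩, if_pos hst]
      rfl
    · rw [if_neg (by tauto), if_neg hst]
  · rw [if_neg hij, if_neg (by tauto)]

end BTDW

namespace BTDW
open scoped Classical

variable {n : ℕ} (A : Matrix (Fin n) (Fin n) ℝ) (θ : ℝ)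

/-- Entrywise walk sum (product-weight form). -/
noncomputable def Qm (k : ℕ) (i j : Fin n) : ℝ :=
  ∑ w : Fin (k + 1) → Fin n,
    if uu k w 0 = i ∧ uu k w k = j then wt A θ k (uu k w) else 0

/-- Walk sum with prescribed second node `p`. -/
noncomputable def Rm (k : ℕ) (i p j : Fin n) : ℝ :=
  ∑ w : Fin (k + 1) → Fin n,
    if uu k w 0 = i ∧ uu k w 1 = p ∧ uu k w k = j then wt A θ k (uu k w) else 0

lemma btdw_eq_Qm (hA01 : ∀ i j, A i j = 0 ∨ A i j = 1) (k : ℕ) (i j : Fin n) :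
    btdwCount A θ k i j = Qm A θ k i j := btdw_apply A θ hA01 k i j

lemma partition (k : ℕ) (i j : Fin n) :
    Qm A θ k i j = ∑ p, Rm A θ k i p j := by
  unfold Qm Rm
  rw [Finset.sum_comm]
  apply Finset.sum_congr rfl
  intro w _
  have key : ∀ p : Fin n,
      (if uu k w 0 = i ∧ uu k w 1 = p ∧ uu k w k = j then wt A θ k (uu k w) else 0) =
      if uu k w 1 = p then (if uu k w 0 = i ∧ uu k w k = j then wt A θ k (uu k w) else 0)
        else 0 := by
    intro p
    by_cases h1 : uu k w 1 = p <;> by_cases h2 : uu k w 0 = i ∧ uu k w k = j <;>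
      simp [h1, h2] <;> tauto
  rw [Finset.sum_congr rfl fun p _ => key p, Finset.sum_ite_eq univ (uu k w 1),
    if_pos (mem_univ _)]

lemma uu_cons_zero (m : ℕ) (x : Fin n) (t : Fin (m + 1) → Fin n) :
    uu (m + 1) (Fin.cons x t) 0 = x := by
  rw [uu_eq _ _ 0 (by omega)]
  rfl

lemma uu_cons_succ (m : ℕ) (x : Fin n) (t : Fin (m + 1) → Fin n) (s : ℕ) (hs : s ≤ m) :
    uu (m + 1) (Fin.cons x t) (s + 1) = uu m t s := by
  rw [uu_eq _ _ (s + 1) (by omega), uu_eq _ _ s hs]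
  have h : (⟨s + 1, by omega⟩ : Fin (m + 2)) = Fin.succ ⟨s, by omega⟩ := rfl
  rw [h, Fin.cons_succ]

/-- Weight of a walk of length `m+1` in terms of its tail (m ≥ 1). -/
lemma wt_succ (m : ℕ) (hm : 1 ≤ m) (u : ℕ → Fin n) :
    wt A θ (m + 1) u =
      A (u 0) (u 1) * ((if u 0 = u 2 then θ else 1) * wt A θ m (fun s => u (s + 1))) := by
  obtain ⟨m', rfl⟩ : ∃ m', m = m' + 1 := ⟨m - 1, by omega⟩
  unfold wt
  rw [Finset.prod_range_succ' (fun s => A (u s) (u (s + 1))) (m' + 1),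
    show (m' + 1 + 1) - 1 = m' + 1 from rfl,
    Finset.prod_range_succ' (fun s => if u s = u (s + 2) then θ else 1) m',
    show (m' + 1) - 1 = m' from rfl]
  have h3 : ∀ s : ℕ, s + 1 + 2 = s + 2 + 1 := fun s => rfl
  simp only [h3]
  ring

lemma wt_cons (m : ℕ) (hm : 1 ≤ m) (x : Fin n) (t : Fin (m + 1) → Fin n) :
    wt A θ (m + 1) (uu (m + 1) (Fin.cons x t)) =
      A x (uu m t 0) * ((if uu m t 1 = x then θ else 1) * wt A θ m (uu m t)) := by
  rw [wt_succ A θ m hm, uu_cons_zero, uu_cons_succ _ _ _ 0 (by omega),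
    uu_cons_succ _ _ _ 1 (by omega),
    wt_congr A θ (u := fun s => uu (m + 1) (Fin.cons x t) (s + 1)) (v := uu m t)
      (fun s hs => uu_cons_succ m x t s hs)]
  congr 2
  by_cases h : uu m t 1 = x <;> simp [h] <;> exact fun h' => absurd h'.symm h

/-- First position-one lemma. -/
lemma uu_cons_one (m : ℕ) (x : Fin n) (t : Fin (m + 1) → Fin n) :
    uu (m + 1) (Fin.cons x t) 1 = uu m t 0 := by
  simpa using uu_cons_succ m x t 0 (by omega)

lemma wt_zero (u : ℕ → Fin n) : wt A θ 0 u = 1 := by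
  unfold wt; simp

lemma wt_one (u : ℕ → Fin n) : wt A θ 1 u = A (u 0) (u 1) := by
  unfold wt; simp

/-- Peel off the first step of a walk with prescribed second node (m ≥ 1). -/
lemma peel (m : ℕ) (hm : 1 ≤ m) (i p j : Fin n) :
    Rm A θ (m + 1) i p j =
      A i p * (Qm A θ m p j - (1 - θ) * Rm A θ m p i j) := by
  unfold Rm Qm
  rw [← Equiv.sum_comp (Fin.consEquiv (fun _ : Fin (m + 2) => Fin n)), Fintype.sum_prod_type]
  dsimp only [Fin.consEquiv, Equiv.coe_fn_mk]
  have key : ∀ x : Fin n, ∀ t : Fin (m + 1) → Fin n,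
      (if uu (m + 1) (Fin.cons x t) 0 = i ∧ uu (m + 1) (Fin.cons x t) 1 = p ∧
          uu (m + 1) (Fin.cons x t) (m + 1) = j
        then wt A θ (m + 1) (uu (m + 1) (Fin.cons x t)) else 0) =
      if x = i then
        (if uu m t 0 = p ∧ uu m t m = j
          then A x (uu m t 0) * ((if uu m t 1 = x then θ else 1) * wt A θ m (uu m t))
          else 0)
      else 0 := by
    intro x t
    rw [uu_cons_zero, uu_cons_one, uu_cons_succ _ _ _ m (by omega), wt_cons A θ m hm]
    by_cases hx : x = i <;> by_cases hc : uu m t 0 = p ∧ uu m t m = j <;>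
      simp [hx, hc] <;> tauto
  refine (Finset.sum_congr rfl fun x _ => Finset.sum_congr rfl fun t _ => key x t).trans ?_
  have collapse : ∀ x : Fin n,
      (∑ t : Fin (m + 1) → Fin n, if x = i then
        (if uu m t 0 = p ∧ uu m t m = j
          then A x (uu m t 0) * ((if uu m t 1 = x then θ else 1) * wt A θ m (uu m t))
          else 0) else 0) =
      if x = i then
        (∑ t : Fin (m + 1) → Fin n,
          if uu m t 0 = p ∧ uu m t m = j
            then A x (uu m t 0) * ((if uu m t 1 = x then θ else 1) * wt A θ m (uu m t))
            else 0) else 0 := by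
    intro x
    by_cases hx : x = i
    · simp only [if_pos hx]
    · simp only [if_neg hx, Finset.sum_const_zero]
  rw [Finset.sum_congr rfl fun x _ => collapse x, Finset.sum_ite_eq' univ i,
    if_pos (mem_univ _)]
  have step : ∀ t : Fin (m + 1) → Fin n,
      (if uu m t 0 = p ∧ uu m t m = j
        then A i (uu m t 0) * ((if uu m t 1 = i then θ else 1) * wt A θ m (uu m t)) else 0) =
      A i p * ((if uu m t 0 = p ∧ uu m t m = j then wt A θ m (uu m t) else 0)
        - (1 - θ) *
          (if uu m t 0 = p ∧ uu m t 1 = i ∧ uu m t m = j then wt A θ m (uu m t) else 0)) := by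
    intro t
    by_cases hc : uu m t 0 = p ∧ uu m t m = j
    · have e1 : (if uu m t 0 = p ∧ uu m t m = j then wt A θ m (uu m t) else 0)
          = wt A θ m (uu m t) := if_pos hc
      by_cases h1 : uu m t 1 = i
      · have e2 : (if uu m t 0 = p ∧ uu m t 1 = i ∧ uu m t m = j
            then wt A θ m (uu m t) else 0) = wt A θ m (uu m t) := if_pos ⟨hc.1, h1, hc.2⟩
        rw [e1, e2, if_pos hc, if_pos h1, hc.1]; ring
      · have e2 : (if uu m t 0 = p ∧ uu m t 1 = i ∧ uu m t m = j
            then wt A θ m (uu m t) else 0) = 0 := if_neg (fun h => h1 h.2.1)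
        rw [e1, e2, if_pos hc, if_neg h1, hc.1]; ring
    · have e1 : (if uu m t 0 = p ∧ uu m t m = j then wt A θ m (uu m t) else 0)
          = 0 := if_neg hc
      have e2 : (if uu m t 0 = p ∧ uu m t 1 = i ∧ uu m t m = j
          then wt A θ m (uu m t) else 0) = 0 := if_neg (fun h => hc ⟨h.1, h.2.2⟩)
      rw [e1, e2, if_neg hc]; ring
  rw [Finset.sum_congr rfl fun t _ => step t]
  rw [← Finset.mul_sum, Finset.sum_sub_distrib, ← Finset.mul_sum]

/-- Length-one case: second node is the endpoint. -/
lemma peel0 (i p j : Fin n) :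
    Rm A θ 1 i p j = A i p * Qm A θ 0 p j := by
  unfold Rm Qm
  rw [← Equiv.sum_comp (Fin.consEquiv (fun _ : Fin 2 => Fin n)), Fintype.sum_prod_type]
  dsimp only [Fin.consEquiv, Equiv.coe_fn_mk]
  have key : ∀ x : Fin n, ∀ t : Fin 1 → Fin n,
      (if uu 1 (Fin.cons x t) 0 = i ∧ uu 1 (Fin.cons x t) 1 = p ∧ uu 1 (Fin.cons x t) 1 = j
        then wt A θ 1 (uu 1 (Fin.cons x t)) else 0) =
      if x = i then
        (if uu 0 t 0 = p ∧ uu 0 t 0 = j then A i p * wt A θ 0 (uu 0 t) else 0)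
      else 0 := by
    intro x t
    rw [uu_cons_zero, uu_cons_one, wt_one, uu_cons_zero, uu_cons_one, wt_zero]
    by_cases hx : x = i <;> by_cases hc : uu 0 t 0 = p ∧ uu 0 t 0 = j
    · rw [if_pos ⟨hx, hc.1, hc.2⟩, if_pos hx, if_pos hc, hx, hc.1, mul_one]
    · rw [if_neg (by tauto), if_pos hx, if_neg hc]
    · rw [if_neg (by tauto), if_neg hx]
    · rw [if_neg (by tauto), if_neg hx]
  refine (Finset.sum_congr rfl fun x _ => Finset.sum_congr rfl fun t _ => key x t).trans ?_
  have collapse : ∀ x : Fin n,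
      (∑ t : Fin 1 → Fin n, if x = i then
        (if uu 0 t 0 = p ∧ uu 0 t 0 = j then A i p * wt A θ 0 (uu 0 t) else 0) else 0) =
      if x = i then
        (∑ t : Fin 1 → Fin n,
          if uu 0 t 0 = p ∧ uu 0 t 0 = j then A i p * wt A θ 0 (uu 0 t) else 0) else 0 := by
    intro x
    by_cases hx : x = i
    · simp only [if_pos hx]
    · simp only [if_neg hx, Finset.sum_const_zero]
  rw [Finset.sum_congr rfl fun x _ => collapse x, Finset.sum_ite_eq' univ i,
    if_pos (mem_univ _)]
  rw [Finset.mul_sum]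
  apply Finset.sum_congr rfl
  intro t _
  by_cases hc : uu 0 t 0 = p ∧ uu 0 t 0 = j
  · rw [if_pos hc, if_pos hc]
  · rw [if_neg hc, if_neg hc, mul_zero]

/-- If there is no edge `i → p` then no walk has first step `i → p`. -/
lemma Rm_eq_zero (k : ℕ) (hk : 1 ≤ k) (i p j : Fin n) (h : A i p = 0) :
    Rm A θ k i p j = 0 := by
  unfold Rm
  apply Finset.sum_eq_zero
  intro w _
  by_cases hc : uu k w 0 = i ∧ uu k w 1 = p ∧ uu k w k = j
  · rw [if_pos hc]
    unfold wt
    rw [Finset.prod_eq_zero (Finset.mem_range.mpr (show 0 < k by omega))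
      (by rw [show (0:ℕ) + 1 = 1 from rfl, hc.1, hc.2.1, h]), zero_mul]
  · rw [if_neg hc]

/-- If there is no reciprocal edge `p → i`, the first step can never be backtracked. -/
lemma peel_noback (m : ℕ) (i p j : Fin n) (h : A p i = 0) :
    Rm A θ (m + 1) i p j = A i p * Qm A θ m p j := by
  rcases Nat.eq_zero_or_pos m with hm | hm
  · subst hm; exact peel0 A θ i p j
  · rw [peel A θ m hm, Rm_eq_zero A θ m hm p i j h, mul_zero, sub_zero]

end BTDW

/-- Corollary 3.2 (left-sided four-term recurrence for backtrack-downweighted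
walk counts). -/
theorem btdw_recurrence_left {n : ℕ} (hn : 1 ≤ n) (A : Matrix (Fin n) (Fin n) ℝ)
    (hA01 : ∀ i j, A i j = 0 ∨ A i j = 1) (hAdiag : ∀ i, A i i = 0)
    (θ : ℝ) (hθ0 : 0 ≤ θ) (hθ1 : θ ≤ 1) (μ : ℝ) (hμ : μ = 1 - θ) :
    ∀ k, 2 ≤ k →
      btdwCount A θ (k + 1) =
        A * btdwCount A θ k + μ • ((μ • 1 - degDiag A) * btdwCount A θ (k - 1)) -
          μ ^ 2 • ((A - recipMat A) * btdwCount A θ (k - 2)) := by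
  intro k hk
  obtain ⟨m, rfl⟩ : ∃ m, k = m + 2 := ⟨k - 2, by omega⟩
  ext i j
  simp only [Matrix.add_apply, Matrix.sub_apply, Matrix.mul_apply, Matrix.smul_apply,
    smul_eq_mul, Matrix.one_apply, degDiag, recipMat, Matrix.diagonal_apply, Matrix.of_apply,
    show m + 2 - 1 = m + 1 from rfl, show m + 2 - 2 = m from rfl,
    BTDW.btdw_eq_Qm A θ hA01]
  have e2 : ∀ p, BTDW.Rm A θ (m + 2) p i j
      = A p i * (BTDW.Qm A θ (m + 1) i j - μ * BTDW.Rm A θ (m + 1) i p j) := fun p => by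
    rw [show m + 2 = (m + 1) + 1 from rfl, BTDW.peel A θ (m + 1) (by omega), hμ]
  have e3 : ∀ p, A i p * (A p i * BTDW.Rm A θ (m + 1) i p j)
      = BTDW.Rm A θ (m + 1) i p j - (A i p - A i p * A p i) * BTDW.Qm A θ m p j := by
    intro p
    rcases hA01 i p with h | h
    · rw [h, BTDW.Rm_eq_zero A θ (m + 1) (by omega) i p j h]; ring
    · rcases hA01 p i with h' | h'
      · rw [h, h', BTDW.peel_noback A θ m i p j h', h]; ring
      · rw [h, h']; ring
  have e4 : ∑ p, BTDW.Rm A θ (m + 1) i p j = BTDW.Qm A θ (m + 1) i j :=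
    (BTDW.partition A θ (m + 1) i j).symm
  have e1 : BTDW.Qm A θ (m + 2 + 1) i j
      = ∑ p, A i p * (BTDW.Qm A θ (m + 2) p j - μ * BTDW.Rm A θ (m + 2) p i j) := by
    rw [BTDW.partition]
    exact Finset.sum_congr rfl fun p _ => by
      rw [show m + 2 + 1 = (m + 2) + 1 from rfl, BTDW.peel A θ (m + 2) (by omega), hμ]
  have per : ∀ p, A i p * (BTDW.Qm A θ (m + 2) p j - μ * BTDW.Rm A θ (m + 2) p i j)
      = A i p * BTDW.Qm A θ (m + 2) p j
        - μ * ((A i p * A p i) * BTDW.Qm A θ (m + 1) i j)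
        + μ ^ 2 * (BTDW.Rm A θ (m + 1) i p j
          - (A i p - A i p * A p i) * BTDW.Qm A θ m p j) := by
    intro p
    rw [e2 p]
    linear_combination μ ^ 2 * e3 p
  have hL : BTDW.Qm A θ (m + 2 + 1) i j
      = (∑ p, A i p * BTDW.Qm A θ (m + 2) p j)
        - μ * ((∑ p, A i p * A p i) * BTDW.Qm A θ (m + 1) i j)
        + μ ^ 2 * (BTDW.Qm A θ (m + 1) i j
          - ∑ p, (A i p - A i p * A p i) * BTDW.Qm A θ m p j) := by
    rw [e1, Finset.sum_congr rfl fun p _ => per p, Finset.sum_add_distrib,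
      Finset.sum_sub_distrib, ← Finset.mul_sum, ← Finset.mul_sum, ← Finset.sum_mul,
      Finset.sum_sub_distrib, e4]
  have emid : (∑ p, (μ * (if i = p then (1:ℝ) else 0)
        - (if i = p then ∑ q, A i q * A q i else 0)) * BTDW.Qm A θ (m + 1) p j)
      = (μ - ∑ q, A i q * A q i) * BTDW.Qm A θ (m + 1) i j := by
    have : ∀ p, (μ * (if i = p then (1:ℝ) else 0)
          - (if i = p then ∑ q, A i q * A q i else 0)) * BTDW.Qm A θ (m + 1) p j
        = if i = p then (μ - ∑ q, A i q * A q i) * BTDW.Qm A θ (m + 1) p j else 0 := by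
      intro p
      by_cases h : i = p
      · rw [if_pos h, if_pos h, if_pos h]; ring
      · rw [if_neg h, if_neg h, if_neg h]; ring
    rw [Finset.sum_congr rfl fun p _ => this p, Finset.sum_ite_eq Finset.univ i,
      if_pos (Finset.mem_univ _)]
  rw [hL, emid]
  ring
end

section
/- Suppose α ≥ 0 is such that the matrix power series Ψ(A) = Σ_{k=0}^∞ α^k q_k(A) converges. Then Ψ(A)·[I − αA − μα²(μI − D) + μ²α³(A − S)] = (1 − μ²α²)·I, where μ = 1 − θ. -/
open Matrix Finset

namespace BTDW

variable {n : ℕ} (A : Matrix (Fin n) (Fin n) ℝ) (θ : ℝ)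

/-- the `s`-th node of a walk, with junk wrap-around for `s > k`. -/
def nthw (k : ℕ) (w : Fin (k + 1) → Fin n) (s : ℕ) : Fin n :=
  w ⟨s % (k + 1), Nat.mod_lt s (Nat.succ_pos k)⟩

lemma nthw_eq (k : ℕ) (w : Fin (k + 1) → Fin n) {s : ℕ} (h : s ≤ k) :
    nthw k w s = w ⟨s, Nat.lt_succ_of_le h⟩ := by
  simp [nthw, Nat.mod_eq_of_lt (Nat.lt_succ_of_le h)]

lemma nthw_snoc_le (k : ℕ) (w : Fin (k + 1) → Fin n) (x : Fin n) {s : ℕ} (h : s ≤ k) :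
    nthw (k + 1) (Fin.snoc w x) s = nthw k w s := by
  rw [nthw_eq _ _ (le_trans h (Nat.le_succ k)), nthw_eq _ _ h]
  have : (⟨s, Nat.lt_succ_of_le (le_trans h (Nat.le_succ k))⟩ : Fin (k + 2)) =
      Fin.castSucc ⟨s, Nat.lt_succ_of_le h⟩ := rfl
  rw [this, Fin.snoc_castSucc]

lemma nthw_snoc_last (k : ℕ) (w : Fin (k + 1) → Fin n) (x : Fin n) :
    nthw (k + 1) (Fin.snoc w x) (k + 1) = x := by
  rw [nthw_eq _ _ le_rfl]
  have : (⟨k + 1, Nat.lt_succ_of_le le_rfl⟩ : Fin (k + 2)) = Fin.last (k + 1) := rfl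
  rw [this, Fin.snoc_last]

/-- weight of a walk: product of edge entries times `θ^(number of backtracks)`. -/
noncomputable def wwt (k : ℕ) (w : Fin (k + 1) → Fin n) : ℝ :=
  (∏ s ∈ Finset.range k, A (nthw k w s) (nthw k w (s + 1))) *
    θ ^ ((Finset.range (k - 1)).filter fun s => nthw k w s = nthw k w (s + 2)).card

lemma wwt_snoc (k : ℕ) (hk : 1 ≤ k) (w : Fin (k + 1) → Fin n) (x : Fin n) :
    wwt A θ (k + 1) (Fin.snoc w x) =
      wwt A θ k w * (A (nthw k w k) x * (if nthw k w (k - 1) = x then θ else 1)) := by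
  obtain ⟨m, rfl⟩ : ∃ m, k = m + 1 := ⟨k - 1, (Nat.succ_pred_eq_of_pos hk).symm⟩
  unfold wwt
  have hprod : (∏ s ∈ Finset.range (m + 2),
      A (nthw (m + 2) (Fin.snoc w x) s) (nthw (m + 2) (Fin.snoc w x) (s + 1))) =
      (∏ s ∈ Finset.range (m + 1), A (nthw (m + 1) w s) (nthw (m + 1) w (s + 1))) *
        A (nthw (m + 1) w (m + 1)) x := by
    rw [Finset.prod_range_succ]
    congr 1
    · refine Finset.prod_congr rfl fun s hs => ?_
      have hs' : s < m + 1 := Finset.mem_range.mp hs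
      rw [nthw_snoc_le _ _ _ (le_of_lt hs'), nthw_snoc_le _ _ _ hs']
    · rw [nthw_snoc_le _ _ _ le_rfl, nthw_snoc_last]
  have hcard : ((Finset.range (m + 2 - 1)).filter fun s =>
        nthw (m + 2) (Fin.snoc w x) s = nthw (m + 2) (Fin.snoc w x) (s + 2)).card =
      ((Finset.range (m + 1 - 1)).filter fun s =>
        nthw (m + 1) w s = nthw (m + 1) w (s + 2)).card +
        (if nthw (m + 1) w m = x then 1 else 0) := by
    have h1 : (m + 2 - 1) = m + 1 := rfl
    have h2 : (m + 1 - 1) = m := rfl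
    rw [h1, h2, Finset.range_add_one, Finset.filter_insert]
    have hms : nthw (m + 2) (Fin.snoc w x) m = nthw (m + 1) w m :=
      nthw_snoc_le _ _ _ (by omega)
    have hml : nthw (m + 2) (Fin.snoc w x) (m + 2) = x := nthw_snoc_last _ _ _
    have hfe : ((Finset.range m).filter fun s =>
        nthw (m + 2) (Fin.snoc w x) s = nthw (m + 2) (Fin.snoc w x) (s + 2)) =
        ((Finset.range m).filter fun s => nthw (m + 1) w s = nthw (m + 1) w (s + 2)) := by
      refine Finset.filter_congr fun s hs => ?_
      have hs' : s < m := Finset.mem_range.mp hs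
      rw [nthw_snoc_le _ _ _ (by omega), nthw_snoc_le _ _ _ (by omega)]
    by_cases hbt : nthw (m + 1) w m = x
    · rw [if_pos (by rw [hms, hml]; exact hbt), if_pos hbt, hfe,
        Finset.card_insert_of_notMem (fun hmem => by
          exact absurd (Finset.mem_range.mp (Finset.mem_of_mem_filter m hmem)) (lt_irrefl m))]
    · rw [if_neg (by rw [hms, hml]; exact hbt), if_neg hbt, hfe, add_zero]
  rw [hprod, hcard, pow_add]
  simp only [Nat.add_sub_cancel]
  by_cases hbt : nthw (m + 1) w m = x
  · rw [if_pos hbt, if_pos hbt]; ring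
  · rw [if_neg hbt, if_neg hbt]; ring

end BTDW

open Matrix Finset

namespace BTDW

variable {n : ℕ} (A : Matrix (Fin n) (Fin n) ℝ) (θ : ℝ)

open scoped Classical

/-- weighted sum over walks of length `k` starting at `i`, with a final factor
depending on the last two nodes. -/
noncomputable def G (k : ℕ) (g : Fin n → Fin n → ℝ) (i : Fin n) : ℝ :=
  ∑ w : Fin (k + 1) → Fin n,
    if nthw k w 0 = i then wwt A θ k w * g (nthw k w (k - 1)) (nthw k w k) else 0

lemma G_congr {k : ℕ} {g g' : Fin n → Fin n → ℝ} (h : ∀ a b, g a b = g' a b) (i : Fin n) :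
    G A θ k g i = G A θ k g' i := by
  have : g = g' := funext fun a => funext fun b => h a b
  rw [this]

lemma G_sub (k : ℕ) (g₁ g₂ : Fin n → Fin n → ℝ) (i : Fin n) :
    G A θ k (fun a b => g₁ a b - g₂ a b) i = G A θ k g₁ i - G A θ k g₂ i := by
  unfold G
  rw [← Finset.sum_sub_distrib]
  exact Finset.sum_congr rfl fun w _ => by split_ifs <;> ring

lemma G_smul (k : ℕ) (c : ℝ) (g : Fin n → Fin n → ℝ) (i : Fin n) :
    G A θ k (fun a b => c * g a b) i = c * G A θ k g i := by
  unfold G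
  rw [Finset.mul_sum]
  exact Finset.sum_congr rfl fun w _ => by split_ifs <;> ring

lemma G_mul_const (k : ℕ) (c : ℝ) (g : Fin n → Fin n → ℝ) (i : Fin n) :
    G A θ k (fun a b => g a b * c) i = G A θ k g i * c := by
  unfold G
  rw [Finset.sum_mul]
  exact Finset.sum_congr rfl fun w _ => by split_ifs <;> ring

lemma G_finsum (k : ℕ) (h : Fin n → Fin n → Fin n → ℝ) (i : Fin n) :
    G A θ k (fun a b => ∑ x, h x a b) i = ∑ x, G A θ k (h x) i := by
  unfold G
  rw [Finset.sum_comm]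
  exact Finset.sum_congr rfl fun w _ => by
    split_ifs with hc
    · rw [Finset.mul_sum]
    · simp

/-- the edge factor `A a b` of the last step is absorbed by the walk weight. -/
lemma G_absorb (hA01 : ∀ i j, A i j = 0 ∨ A i j = 1) (k : ℕ) (hk : 1 ≤ k)
    (g : Fin n → Fin n → ℝ) (i : Fin n) :
    G A θ k (fun a b => A a b * g a b) i = G A θ k g i := by
  obtain ⟨m, rfl⟩ : ∃ m, k = m + 1 := ⟨k - 1, (Nat.succ_pred_eq_of_pos hk).symm⟩
  unfold G
  refine Finset.sum_congr rfl fun w _ => ?_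
  split_ifs with hc
  · simp only [Nat.add_sub_cancel]
    have hmem : m ∈ Finset.range (m + 1) := Finset.mem_range.mpr (Nat.lt_succ_self m)
    have hsplit : (∏ s ∈ Finset.range (m + 1),
        A (nthw (m + 1) w s) (nthw (m + 1) w (s + 1))) =
        A (nthw (m + 1) w m) (nthw (m + 1) w (m + 1)) *
          ∏ s ∈ (Finset.range (m + 1)).erase m,
            A (nthw (m + 1) w s) (nthw (m + 1) w (s + 1)) :=
      (Finset.mul_prod_erase _ _ hmem).symm
    unfold wwt
    simp only [Nat.add_sub_cancel]
    rw [hsplit]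
    rcases hA01 (nthw (m + 1) w m) (nthw (m + 1) w (m + 1)) with h0 | h1
    · rw [h0]; ring
    · rw [h1]; ring
  · rfl

/-- master recurrence: peel off the last step of a walk. -/
lemma G_succ (k : ℕ) (hk : 1 ≤ k) (g : Fin n → Fin n → ℝ) (i : Fin n) :
    G A θ (k + 1) g i =
      G A θ k (fun a b => (∑ x, A b x * g b x) - (1 - θ) * (A b a * g b a)) i := by
  unfold G
  rw [← Equiv.sum_comp (Fin.snocEquiv (fun _ => Fin n)) (fun w' =>
    if nthw (k + 1) w' 0 = i then
      wwt A θ (k + 1) w' * g (nthw (k + 1) w' (k + 1 - 1)) (nthw (k + 1) w' (k + 1)) else 0)]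
  rw [Fintype.sum_prod_type]
  rw [Finset.sum_comm]
  refine Finset.sum_congr rfl fun w _ => ?_
  have h0 : ∀ x : Fin n, nthw (k + 1) (Fin.snoc w x) 0 = nthw k w 0 :=
    fun x => nthw_snoc_le _ _ _ (Nat.zero_le k)
  have hk1 : ∀ x : Fin n, nthw (k + 1) (Fin.snoc w x) (k + 1 - 1) = nthw k w k := by
    intro x
    simp only [Nat.add_sub_cancel]
    exact nthw_snoc_le _ _ _ le_rfl
  have hlast : ∀ x : Fin n, nthw (k + 1) (Fin.snoc w x) (k + 1) = x :=
    fun x => nthw_snoc_last _ _ _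
  have hsnoceq : ∀ x : Fin n, Fin.snocEquiv (fun _ => Fin n) (x, w) = Fin.snoc w x :=
    fun x => rfl
  simp only [hsnoceq]
  by_cases hc : nthw k w 0 = i
  · simp only [h0, hk1, hlast, hc, if_pos, wwt_snoc A θ k hk w]
    set a := nthw k w (k - 1)
    set b := nthw k w k
    have key : ∀ x : Fin n,
        wwt A θ k w * (A b x * (if a = x then θ else 1)) * g b x =
          wwt A θ k w * (A b x * g b x - (if a = x then (1 - θ) * (A b x * g b x) else 0)) := by
      intro x; split_ifs <;> ring
    rw [Finset.sum_congr rfl fun x _ => key x, ← Finset.mul_sum]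
    congr 1
    rw [Finset.sum_sub_distrib, Finset.sum_ite_eq]
    simp
  · simp only [h0, hc, if_neg, not_false_iff]
    simp

end BTDW

namespace BTDW

variable {n : ℕ} (A : Matrix (Fin n) (Fin n) ℝ) (θ : ℝ)

open scoped Classical

lemma btdw_eq (hA01 : ∀ i j, A i j = 0 ∨ A i j = 1) (k : ℕ) (i j : Fin n) :
    btdwCount A θ k i j = G A θ k (fun _ b => if b = j then 1 else 0) i := by
  unfold btdwCount G
  simp only [Matrix.of_apply]
  refine Finset.sum_congr rfl fun w _ => ?_
  show (if nthw k w 0 = i ∧ nthw k w k = j ∧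
      (∀ s ∈ Finset.range k, A (nthw k w s) (nthw k w (s + 1)) = 1)
    then θ ^ ((Finset.range (k - 1)).filter fun s => nthw k w s = nthw k w (s + 2)).card
    else 0) = _
  by_cases h0 : nthw k w 0 = i
  · by_cases hkk : nthw k w k = j
    · by_cases hedge : ∀ s ∈ Finset.range k, A (nthw k w s) (nthw k w (s + 1)) = 1
      · rw [if_pos ⟨h0, hkk, hedge⟩, if_pos h0]
        unfold wwt
        rw [Finset.prod_eq_one hedge, if_pos hkk]
        ring
      · rw [if_neg (by tauto), if_pos h0]
        push_neg at hedge
        obtain ⟨s, hs, hne⟩ := hedge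
        have h0' : A (nthw k w s) (nthw k w (s + 1)) = 0 := by
          rcases hA01 (nthw k w s) (nthw k w (s + 1)) with h | h
          · exact h
          · exact absurd h hne
        unfold wwt
        rw [Finset.prod_eq_zero hs h0', if_pos hkk]
        ring
    · rw [if_neg (by tauto), if_pos h0, if_neg hkk]
      ring
  · rw [if_neg (by tauto), if_neg h0]

lemma G_one (g : Fin n → Fin n → ℝ) (i : Fin n) :
    G A θ 1 g i = ∑ x, A i x * g i x := by
  unfold G
  rw [← Equiv.sum_comp (Fin.snocEquiv (fun _ => Fin n)) (fun w : Fin 2 → Fin n =>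
    if nthw 1 w 0 = i then wwt A θ 1 w * g (nthw 1 w 0) (nthw 1 w 1) else 0)]
  rw [Fintype.sum_prod_type, Finset.sum_comm]
  have huniq : ∀ w : Fin 1 → Fin n, ∀ s : ℕ, nthw 0 w s = w 0 := by
    intro w s
    unfold nthw
    congr 1
    exact Fin.ext (by simp [Nat.mod_one])
  have h1 : ∀ (w : Fin 1 → Fin n) (x : Fin n),
      Fin.snocEquiv (fun _ => Fin n) (x, w) = Fin.snoc w x := fun _ _ => rfl
  simp only [h1]
  have h2 : ∀ (w : Fin 1 → Fin n) (x : Fin n), nthw 1 (Fin.snoc w x) 0 = w 0 := by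
    intro w x; rw [nthw_snoc_le 0 w x (le_refl 0), huniq]
  have h3 : ∀ (w : Fin 1 → Fin n) (x : Fin n), nthw 1 (Fin.snoc w x) 1 = x :=
    fun w x => nthw_snoc_last 0 w x
  have h4 : ∀ (w : Fin 1 → Fin n) (x : Fin n), wwt A θ 1 (Fin.snoc w x) = A (w 0) x := by
    intro w x
    unfold wwt
    simp only [Nat.sub_self, Finset.range_one, Finset.range_zero, Finset.filter_empty, Finset.card_empty,
      pow_zero, mul_one, Finset.prod_singleton]
    rw [h2, h3]
  rw [← Equiv.sum_comp (Equiv.funUnique (Fin 1) (Fin n)).symm (fun w : Fin 1 → Fin n =>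
    ∑ x, if nthw 1 (Fin.snoc w x) 0 = i then
      wwt A θ 1 (Fin.snoc w x) * g (nthw 1 (Fin.snoc w x) 0) (nthw 1 (Fin.snoc w x) 1) else 0)]
  simp only [h2, h3, h4]
  have h5 : ∀ v : Fin n, ((Equiv.funUnique (Fin 1) (Fin n)).symm v) 0 = v := fun v => rfl
  simp only [h5]
  rw [Finset.sum_comm]
  refine Finset.sum_congr rfl fun x _ => ?_
  rw [Finset.sum_ite_eq' Finset.univ i (fun v => A v x * g v x)]
  simp

noncomputable def Umat (k : ℕ) : Matrix (Fin n) (Fin n) ℝ :=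
  Matrix.of fun i j => G A θ k (fun a b => if a = j then A b a else 0) i

noncomputable def Rmat (k : ℕ) : Matrix (Fin n) (Fin n) ℝ :=
  Matrix.of fun i j => G A θ k (fun a b => if b = j then A j a * A a j else 0) i

end BTDW

namespace BTDW

variable {n : ℕ} (A : Matrix (Fin n) (Fin n) ℝ) (θ : ℝ)

open scoped Classical

lemma Q_zero : btdwCount A θ 0 = 1 := by
  ext i j
  unfold btdwCount
  simp only [Matrix.of_apply]
  rw [← Equiv.sum_comp (Equiv.funUnique (Fin 1) (Fin n)).symm]
  have h5 : ∀ (v : Fin n) (s : ℕ),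
      ((Equiv.funUnique (Fin 1) (Fin n)).symm v) ⟨s % 1, Nat.mod_lt s (Nat.succ_pos 0)⟩ = v :=
    fun v s => rfl
  simp only [h5]
  simp only [Finset.range_zero, Finset.notMem_empty, false_implies, implies_true, and_true,
    Nat.zero_sub, Finset.filter_empty, Finset.card_empty, pow_zero]
  rw [Finset.sum_congr rfl (fun v _ => by
    rw [show (if v = i ∧ v = j then (1:ℝ) else 0) =
      if v = i then (if i = j then 1 else 0) else 0 from by
        by_cases h1 : v = i <;> by_cases h2 : v = j <;> simp_all])]
  rw [Finset.sum_ite_eq' Finset.univ i]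
  simp [Matrix.one_apply]

lemma Q_one (hA01 : ∀ i j, A i j = 0 ∨ A i j = 1) : btdwCount A θ 1 = A := by
  ext i j
  rw [btdw_eq A θ hA01 1 i j, G_one]
  rw [Finset.sum_congr rfl (fun x _ => by
    rw [show A i x * (if x = j then (1:ℝ) else 0) = if x = j then A i x else 0 from by
      split_ifs <;> ring])]
  rw [Finset.sum_ite_eq' Finset.univ j]
  simp

lemma U_one : Umat A θ 1 = degDiag A := by
  ext i j
  show G A θ 1 (fun a b => if a = j then A b a else 0) i = degDiag A i j
  rw [G_one]
  by_cases h : i = j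
  · subst h
    simp only [if_pos rfl, degDiag, Matrix.diagonal_apply_eq, Matrix.mul_apply]
    simp
  · simp only [if_neg h, mul_zero, Finset.sum_const_zero, degDiag,
      Matrix.diagonal_apply_ne _ h]

lemma R_one (hA01 : ∀ i j, A i j = 0 ∨ A i j = 1) : Rmat A θ 1 = recipMat A := by
  ext i j
  show G A θ 1 (fun a b => if b = j then A j a * A a j else 0) i = recipMat A i j
  rw [G_one]
  rw [Finset.sum_congr rfl (fun x _ => by
    rw [show A i x * (if x = j then A j i * A i j else 0) =
      if x = j then A i x * (A j i * A i j) else 0 from by split_ifs <;> ring])]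
  rw [Finset.sum_ite_eq' Finset.univ j]
  simp only [Finset.mem_univ, if_pos, recipMat, Matrix.of_apply]
  rcases hA01 i j with h | h <;> rw [h] <;> ring

lemma row_pick (M : Matrix (Fin n) (Fin n) ℝ) (j b : Fin n) :
    (∑ x, (if b = x then (1:ℝ) else 0) * M x j) = M b j := by
  rw [Finset.sum_congr rfl (fun x _ => by rw [ite_mul, one_mul, zero_mul]),
    Finset.sum_ite_eq Finset.univ b]
  simp

lemma first_term (hA01 : ∀ i j, A i j = 0 ∨ A i j = 1) (k : ℕ)
    (M : Matrix (Fin n) (Fin n) ℝ) (i j : Fin n) :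
    G A θ k (fun _ b => M b j) i = (btdwCount A θ k * M) i j := by
  rw [G_congr A θ (fun a b => (row_pick M j b).symm) i,
    G_finsum A θ k (fun x a b => (if b = x then (1:ℝ) else 0) * M x j) i]
  rw [Matrix.mul_apply]
  refine Finset.sum_congr rfl fun x _ => ?_
  rw [G_mul_const, ← btdw_eq A θ hA01 k i x]

lemma rec_q (hA01 : ∀ i j, A i j = 0 ∨ A i j = 1) (k : ℕ) (hk : 1 ≤ k) :
    btdwCount A θ (k + 1) = btdwCount A θ k * A - (1 - θ) • Umat A θ k := by
  ext i j
  rw [Matrix.sub_apply, Matrix.smul_apply, btdw_eq A θ hA01 (k + 1) i j, G_succ A θ k hk]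
  have hpt : ∀ a b : Fin n,
      ((∑ x, A b x * (if x = j then (1:ℝ) else 0)) -
        (1 - θ) * (A b a * if a = j then (1:ℝ) else 0)) =
      A b j - (1 - θ) * (if a = j then A b a else 0) := by
    intro a b
    congr 1
    · rw [Finset.sum_congr rfl (fun x _ => by rw [mul_ite, mul_one, mul_zero]),
        Finset.sum_ite_eq' Finset.univ j]
      simp
    · congr 1
      split_ifs <;> ring
  rw [G_congr A θ hpt i,
    G_sub A θ k (fun _ b => A b j) (fun a b => (1 - θ) * (if a = j then A b a else 0)) i,
    first_term A θ hA01 k A i j, G_smul]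
  rfl

lemma rec_u (hA01 : ∀ i j, A i j = 0 ∨ A i j = 1) (k : ℕ) (hk : 1 ≤ k) :
    Umat A θ (k + 1) = btdwCount A θ k * degDiag A - (1 - θ) • Rmat A θ k := by
  ext i j
  rw [Matrix.sub_apply, Matrix.smul_apply]
  show G A θ (k + 1) (fun a b => if a = j then A b a else 0) i = _
  rw [G_succ A θ k hk]
  have hpt : ∀ a b : Fin n,
      ((∑ x, A b x * (if b = j then A x b else 0)) -
        (1 - θ) * (A b a * if b = j then A a b else 0)) =
      degDiag A b j - (1 - θ) * (if b = j then A j a * A a j else 0) := by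
    intro a b
    by_cases hb : b = j
    · subst hb
      simp only [if_pos rfl, degDiag, Matrix.diagonal_apply_eq, Matrix.mul_apply]
      simp
    · simp only [if_neg hb, degDiag, Matrix.diagonal_apply_ne _ hb]
      simp
  rw [G_congr A θ hpt i,
    G_sub A θ k (fun _ b => degDiag A b j)
      (fun a b => (1 - θ) * (if b = j then A j a * A a j else 0)) i,
    first_term A θ hA01 k (degDiag A) i j, G_smul]
  rfl

lemma rec_r (hA01 : ∀ i j, A i j = 0 ∨ A i j = 1) (k : ℕ) (hk : 1 ≤ k) :
    Rmat A θ (k + 1) = btdwCount A θ k * recipMat A - (1 - θ) • Umat A θ k := by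
  have idem : ∀ a b, A a b * A a b = A a b := by
    intro a b; rcases hA01 a b with h | h <;> rw [h] <;> ring
  ext i j
  rw [Matrix.sub_apply, Matrix.smul_apply]
  show G A θ (k + 1) (fun a b => if b = j then A j a * A a j else 0) i = _
  rw [G_succ A θ k hk]
  have hpt : ∀ a b : Fin n,
      ((∑ x, A b x * (if x = j then A j b * A b j else 0)) -
        (1 - θ) * (A b a * if a = j then A j b * A b j else 0)) =
      recipMat A b j - (1 - θ) * (A a b * (if a = j then A b a else 0)) := by
    intro a b
    congr 1
    · rw [Finset.sum_congr rfl (fun x _ => by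
        rw [show A b x * (if x = j then A j b * A b j else 0) =
          if x = j then A b x * (A j b * A b j) else 0 from by split_ifs <;> ring]),
        Finset.sum_ite_eq' Finset.univ j]
      simp only [Finset.mem_univ, if_pos, recipMat, Matrix.of_apply]
      calc A b j * (A j b * A b j) = A b j * A b j * A j b := by ring
        _ = A b j * A j b := by rw [idem]
    · congr 1
      by_cases ha : a = j
      · subst ha
        rw [if_pos rfl, if_pos rfl]
        calc A b a * (A a b * A b a) = A b a * A b a * A a b := by ring
          _ = A b a * A a b := by rw [idem]
          _ = A a b * A b a := by ring
      · rw [if_neg ha, if_neg ha]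
        ring
  rw [G_congr A θ hpt i,
    G_sub A θ k (fun _ b => recipMat A b j)
      (fun a b => (1 - θ) * (A a b * (if a = j then A b a else 0))) i,
    first_term A θ hA01 k (recipMat A) i j, G_smul,
    G_absorb A θ hA01 k hk (fun a b => if a = j then A b a else 0) i]
  rfl

end BTDW

namespace BTDW

variable {n : ℕ} (A : Matrix (Fin n) (Fin n) ℝ) (θ : ℝ)

lemma Q_two (hA01 : ∀ i j, A i j = 0 ∨ A i j = 1) :
    btdwCount A θ 2 = A * A - (1 - θ) • degDiag A := by
  rw [show (2:ℕ) = 1 + 1 from rfl, rec_q A θ hA01 1 le_rfl, Q_one A θ hA01, U_one]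

lemma rec_full (hA01 : ∀ i j, A i j = 0 ∨ A i j = 1) (k : ℕ) :
    btdwCount A θ (k + 3) =
      btdwCount A θ (k + 2) * A
        + (1 - θ) • (btdwCount A θ (k + 1) * ((1 - θ) • 1 - degDiag A))
        - (1 - θ) ^ 2 • (btdwCount A θ k * (A - recipMat A)) := by
  cases k with
  | zero =>
    rw [show (0:ℕ) + 3 = 2 + 1 from rfl, rec_q A θ hA01 2 (by omega),
      show (2:ℕ) = 1 + 1 from rfl, rec_u A θ hA01 1 le_rfl, Q_one A θ hA01, R_one A θ hA01,
      Q_zero]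
    simp only [Matrix.mul_sub, Matrix.mul_one, Matrix.one_mul, mul_smul_comm, smul_sub,
      smul_smul]
    module
  | succ m =>
    have hq := rec_q A θ hA01 (m + 1) (by omega)
    have hu1 : (1 - θ) • Umat A θ (m + 1) =
        btdwCount A θ (m + 1) * A - btdwCount A θ (m + 2) := by
      rw [hq]; abel
    have hr : Rmat A θ (m + 2) = btdwCount A θ (m + 1) * recipMat A -
        (btdwCount A θ (m + 1) * A - btdwCount A θ (m + 2)) := by
      rw [rec_r A θ hA01 (m + 1) (by omega), hu1]
    rw [show m + 1 + 3 = (m + 3) + 1 from rfl, rec_q A θ hA01 (m + 3) (by omega),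
      show m + 3 = (m + 2) + 1 from rfl, rec_u A θ hA01 (m + 2) (by omega), hr]
    simp only [Matrix.mul_sub, Matrix.mul_one, mul_smul_comm, smul_sub, smul_smul]
    module

end BTDW


set_option maxHeartbeats 1000000 in
/-- Theorem 4.1: the generating function `Ψ(A) = Σ α^k q_k(A)` satisfies
`Ψ(A)[I − αA − μα²(μI − D) + μ²α³(A − S)] = (1 − μ²α²) I`. -/
theorem btdw_generating_function {n : ℕ} (hn : 1 ≤ n) (A : Matrix (Fin n) (Fin n) ℝ)
    (hA01 : ∀ i j, A i j = 0 ∨ A i j = 1) (hAdiag : ∀ i, A i i = 0)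
    (θ : ℝ) (hθ0 : 0 ≤ θ) (hθ1 : θ ≤ 1) (μ : ℝ) (hμ : μ = 1 - θ)
    (α : ℝ) (hα : 0 ≤ α)
    (hsum : Summable fun k : ℕ => α ^ k • btdwCount A θ k) :
    (∑' k : ℕ, α ^ k • btdwCount A θ k) *
        (1 - α • A - (μ * α ^ 2) • (μ • 1 - degDiag A) +
          (μ ^ 2 * α ^ 3) • (A - recipMat A)) =
      (1 - μ ^ 2 * α ^ 2) • (1 : Matrix (Fin n) (Fin n) ℝ) := by
  subst hμ
  set Ψ : Matrix (Fin n) (Fin n) ℝ := ∑' k : ℕ, α ^ k • btdwCount A θ k with hΨ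
  have hmul : ∀ M : Matrix (Fin n) (Fin n) ℝ,
      Summable fun k : ℕ => (α ^ k • btdwCount A θ k) * M := fun M => hsum.mul_right M
  have htmul : ∀ M : Matrix (Fin n) (Fin n) ℝ,
      (∑' k : ℕ, (α ^ k • btdwCount A θ k) * M) = Ψ * M := fun M => hsum.tsum_mul_right M
  have hA2 : (∑' k : ℕ, (α ^ (k + 2) • btdwCount A θ (k + 2)) * A) =
      Ψ * A - ((α ^ 0 • btdwCount A θ 0) * A + (α ^ 1 • btdwCount A θ 1) * A) := by
    have h := Summable.sum_add_tsum_nat_add (f := fun k : ℕ => (α ^ k • btdwCount A θ k) * A) 2 (hmul A)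
    rw [Finset.sum_range_succ, Finset.sum_range_one, htmul A] at h
    exact eq_sub_of_add_eq' h
  have hC2s : (∑' k : ℕ, (α ^ (k + 1) • btdwCount A θ (k + 1)) *
        ((1 - θ) • 1 - degDiag A)) =
      Ψ * ((1 - θ) • 1 - degDiag A) -
        (α ^ 0 • btdwCount A θ 0) * ((1 - θ) • 1 - degDiag A) := by
    have h := Summable.sum_add_tsum_nat_add
      (f := fun k : ℕ => (α ^ k • btdwCount A θ k) * ((1 - θ) • 1 - degDiag A)) 1
      (hmul ((1 - θ) • 1 - degDiag A))
    rw [Finset.sum_range_one, htmul ((1 - θ) • 1 - degDiag A)] at h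
    exact eq_sub_of_add_eq' h
  have hC3s : (∑' k : ℕ, (α ^ k • btdwCount A θ k) * (A - recipMat A)) =
      Ψ * (A - recipMat A) := htmul (A - recipMat A)
  have hterm : ∀ k : ℕ, α ^ (k + 3) • btdwCount A θ (k + 3) =
      α • ((α ^ (k + 2) • btdwCount A θ (k + 2)) * A)
        + ((1 - θ) * α ^ 2) • ((α ^ (k + 1) • btdwCount A θ (k + 1)) *
            ((1 - θ) • 1 - degDiag A))
        - ((1 - θ) ^ 2 * α ^ 3) • ((α ^ k • btdwCount A θ k) * (A - recipMat A)) := by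
    intro k
    rw [BTDW.rec_full A θ hA01 k]
    simp only [smul_mul_assoc, smul_smul, smul_add, smul_sub]
    module
  have s1 : Summable fun k : ℕ => α • ((α ^ (k + 2) • btdwCount A θ (k + 2)) * A) :=
    Summable.const_smul α ((summable_nat_add_iff 2).mpr (hmul A))
  have s2 : Summable fun k : ℕ => ((1 - θ) * α ^ 2) •
      ((α ^ (k + 1) • btdwCount A θ (k + 1)) * ((1 - θ) • 1 - degDiag A)) :=
    Summable.const_smul _ ((summable_nat_add_iff 1).mpr (hmul ((1 - θ) • 1 - degDiag A)))
  have s3 : Summable fun k : ℕ => ((1 - θ) ^ 2 * α ^ 3) •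
      ((α ^ k • btdwCount A θ k) * (A - recipMat A)) :=
    Summable.const_smul _ (hmul (A - recipMat A))
  have htail : (∑' k : ℕ, α ^ (k + 3) • btdwCount A θ (k + 3)) =
      α • (Ψ * A - ((α ^ 0 • btdwCount A θ 0) * A + (α ^ 1 • btdwCount A θ 1) * A))
        + ((1 - θ) * α ^ 2) • (Ψ * ((1 - θ) • 1 - degDiag A) -
            (α ^ 0 • btdwCount A θ 0) * ((1 - θ) • 1 - degDiag A))
        - ((1 - θ) ^ 2 * α ^ 3) • (Ψ * (A - recipMat A)) := by
    rw [tsum_congr hterm, Summable.tsum_sub (s1.add s2) s3, Summable.tsum_add s1 s2,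
      Summable.tsum_const_smul α ((summable_nat_add_iff 2).mpr (hmul A)),
      Summable.tsum_const_smul ((1 - θ) * α ^ 2)
        ((summable_nat_add_iff 1).mpr (hmul ((1 - θ) • 1 - degDiag A))),
      Summable.tsum_const_smul ((1 - θ) ^ 2 * α ^ 3) (hmul (A - recipMat A)),
      hA2, hC2s, hC3s]
  have hkey : Ψ = (α ^ 0 • btdwCount A θ 0) + (α ^ 1 • btdwCount A θ 1)
      + (α ^ 2 • btdwCount A θ 2)
      + (α • (Ψ * A - ((α ^ 0 • btdwCount A θ 0) * A + (α ^ 1 • btdwCount A θ 1) * A))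
        + ((1 - θ) * α ^ 2) • (Ψ * ((1 - θ) • 1 - degDiag A) -
            (α ^ 0 • btdwCount A θ 0) * ((1 - θ) • 1 - degDiag A))
        - ((1 - θ) ^ 2 * α ^ 3) • (Ψ * (A - recipMat A))) := by
    conv_lhs => rw [hΨ, ← Summable.sum_add_tsum_nat_add 3 hsum, Finset.sum_range_succ,
      Finset.sum_range_succ, Finset.sum_range_one]
    rw [htail]
  have hgoal : Ψ - α • (Ψ * A)
      - ((1 - θ) * α ^ 2) • (Ψ * ((1 - θ) • 1 - degDiag A))
      + ((1 - θ) ^ 2 * α ^ 3) • (Ψ * (A - recipMat A)) =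
      (1 - (1 - θ) ^ 2 * α ^ 2) • (1 : Matrix (Fin n) (Fin n) ℝ) := by
    nth_rewrite 1 [hkey]
    rw [BTDW.Q_zero A θ, BTDW.Q_one A θ hA01, BTDW.Q_two A θ hA01]
    simp only [pow_zero, pow_one, one_smul, one_mul, Matrix.one_mul, smul_mul_assoc,
      Matrix.mul_sub, Matrix.mul_one, mul_smul_comm, smul_sub, smul_add, smul_smul]
    module
  calc Ψ * (1 - α • A - ((1 - θ) * α ^ 2) • ((1 - θ) • 1 - degDiag A) +
        ((1 - θ) ^ 2 * α ^ 3) • (A - recipMat A))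
      = Ψ - α • (Ψ * A) - ((1 - θ) * α ^ 2) • (Ψ * ((1 - θ) • 1 - degDiag A))
        + ((1 - θ) ^ 2 * α ^ 3) • (Ψ * (A - recipMat A)) := by
        simp only [mul_add, mul_sub, mul_one, mul_smul_comm]
    _ = (1 - (1 - θ) ^ 2 * α ^ 2) • (1 : Matrix (Fin n) (Fin n) ℝ) := hgoal
end

section
/- Let A be the adjacency matrix of the star graph S_{1,m}. Then for every k ≥ 0 and every θ ∈ [0,1], the odd-length BTDW count matrices satisfy q_{2k+1}(A) = η^k·A, where η = θ(θ + m − 1). -/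
open Matrix Finset

/-- Adjacency matrix of the star graph `S_{1,m}` on `m + 1` nodes: node `0` (the hub)
is joined to every other node, and there are no other edges. -/
def starAdj (m : ℕ) : Matrix (Fin (m + 1)) (Fin (m + 1)) ℝ :=
  Matrix.of fun i j => if (i = 0 ∧ j ≠ 0) ∨ (i ≠ 0 ∧ j = 0) then 1 else 0

section Aux

private lemma star_edge {m : ℕ} {x y : Fin (m + 1)} (h : starAdj m x y = 1) :
    (x = 0 ∧ y ≠ 0) ∨ (x ≠ 0 ∧ y = 0) := by
  by_contra hc
  simp only [starAdj, Matrix.of_apply] at h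
  rw [if_neg hc] at h
  exact one_ne_zero h.symm

private lemma star_edge' {m : ℕ} {x y : Fin (m + 1)} (h : (x = 0 ∧ y ≠ 0) ∨ (x ≠ 0 ∧ y = 0)) :
    starAdj m x y = 1 := by
  simp only [starAdj, Matrix.of_apply]
  rw [if_pos h]

private lemma star_alt0 {m K : ℕ} {w : ℕ → Fin (m + 1)}
    (h : ∀ s ∈ Finset.range K, starAdj m (w s) (w (s + 1)) = 1) (h0 : w 0 = 0) :
    ∀ s, s ≤ K → (w s = 0 ↔ s % 2 = 0) := by
  intro s
  induction s with
  | zero => intro _; simp [h0]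
  | succ s ih =>
    intro hs
    have ihs := ih (by omega)
    rcases star_edge (h s (Finset.mem_range.2 (by omega))) with ⟨ha, hb⟩ | ⟨ha, hb⟩
    · have h2 := ihs.1 ha
      exact ⟨fun hz => absurd hz hb, fun hp => by omega⟩
    · have h2 : ¬ s % 2 = 0 := fun hp => ha (ihs.2 hp)
      exact ⟨fun _ => by omega, fun _ => hb⟩

private lemma star_alt1 {m K : ℕ} {w : ℕ → Fin (m + 1)}
    (h : ∀ s ∈ Finset.range K, starAdj m (w s) (w (s + 1)) = 1) (h0 : w 0 ≠ 0) :
    ∀ s, s ≤ K → (w s = 0 ↔ s % 2 = 1) := by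
  intro s
  induction s with
  | zero => intro _; simp [h0]
  | succ s ih =>
    intro hs
    have ihs := ih (by omega)
    rcases star_edge (h s (Finset.mem_range.2 (by omega))) with ⟨ha, hb⟩ | ⟨ha, hb⟩
    · have h2 := ihs.1 ha
      exact ⟨fun hz => absurd hz hb, fun hp => by omega⟩
    · have h2 : ¬ s % 2 = 1 := fun hp => ha (ihs.2 hp)
      exact ⟨fun _ => by omega, fun _ => hb⟩

/-- sequence `x₀,…,x_{k-1}` extended by `c` on the right. -/
private def extR {m k : ℕ} (x : Fin k → Fin m) (c : Fin m) (t : ℕ) : Fin m :=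
  if h : t < k then x ⟨t, h⟩ else c

private lemma extR_cons {m k : ℕ} (a : Fin m) (x : Fin k → Fin m) (c : Fin m) (t : ℕ) :
    extR (Fin.cons a x) c (t + 1) = extR x c t := by
  unfold extR
  by_cases h : t < k
  · rw [dif_pos (by omega : t + 1 < k + 1), dif_pos h]
    exact Fin.cons_succ (α := fun _ : Fin (k + 1) => Fin m) a x ⟨t, h⟩
  · rw [dif_neg (by omega : ¬ t + 1 < k + 1), dif_neg h]

private lemma extR_cons_zero {m k : ℕ} (a : Fin m) (x : Fin k → Fin m) (c : Fin m) :
    extR (Fin.cons a x) c 0 = a := by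
  rw [extR, dif_pos (Nat.succ_pos k)]
  simp

/-- sequence `c,x₀,…,x_{k-1}` (`c` prepended on the left). -/
private def extL {m k : ℕ} (c : Fin m) (x : Fin k → Fin m) (t : ℕ) : Fin m :=
  if h : 0 < t ∧ t ≤ k then x ⟨t - 1, by omega⟩ else c

private lemma extL_zero {m k : ℕ} (c : Fin m) (x : Fin k → Fin m) : extL c x 0 = c :=
  dif_neg (by omega)

private lemma extL_cons {m k : ℕ} (c a : Fin m) (x : Fin k → Fin m) {t : ℕ} (ht : t ≤ k) :
    extL c (Fin.cons a x) (t + 1) = extL a x t := by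
  unfold extL
  rcases Nat.eq_zero_or_pos t with rfl | hp
  · rw [dif_pos (by omega), dif_neg (by omega)]
    simp
  · rw [dif_pos (by omega), dif_pos (by omega)]
    have he : (⟨t + 1 - 1, by omega⟩ : Fin (k + 1)) = Fin.succ ⟨t - 1, by omega⟩ := by
      apply Fin.ext; simp; omega
    rw [he, Fin.cons_succ]

private def mR {m k : ℕ} (x : Fin k → Fin m) (c : Fin m) : ℕ :=
  ∑ t ∈ Finset.range k, if extR x c t = extR x c (t + 1) then 1 else 0

private def mL {m k : ℕ} (c : Fin m) (x : Fin k → Fin m) : ℕ :=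
  ∑ t ∈ Finset.range k, if extL c x t = extL c x (t + 1) then 1 else 0

private lemma sum_if_eq_fin {m : ℕ} (b : Fin m) (θ : ℝ) :
    ∑ a : Fin m, (if a = b then θ else 1) = θ + m - 1 := by
  have h1 : ∀ a : Fin m, (if a = b then θ else 1) = (if a = b then θ - 1 else 0) + 1 := by
    intro a; split <;> ring
  rw [Finset.sum_congr rfl fun a _ => h1 a, Finset.sum_add_distrib,
    Finset.sum_ite_eq' Finset.univ b fun _ => θ - 1]
  simp
  ring

private lemma sum_theta_R {m : ℕ} (θ : ℝ) :
    ∀ (k : ℕ) (c : Fin m), ∑ x : Fin k → Fin m, θ ^ mR x c = (θ + m - 1) ^ k := by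
  intro k
  induction k with
  | zero => intro c; simp [mR]
  | succ k ih =>
    intro c
    rw [← Equiv.sum_comp (Fin.consEquiv fun _ => Fin m) (fun x => θ ^ mR x c),
      Fintype.sum_prod_type]
    have hM : ∀ (a : Fin m) (x : Fin k → Fin m),
        mR (Fin.cons a x) c = (if a = extR x c 0 then 1 else 0) + mR x c := by
      intro a x
      simp only [mR, Finset.sum_range_succ' _ k, extR_cons, extR_cons_zero]
      rw [add_comm]
    calc ∑ a : Fin m, ∑ x : Fin k → Fin m, θ ^ mR ((Fin.consEquiv fun _ => Fin m) (a, x)) c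
        = ∑ x : Fin k → Fin m, ∑ a : Fin m, (if a = extR x c 0 then θ else 1) * θ ^ mR x c := by
          rw [Finset.sum_comm]
          refine Finset.sum_congr rfl fun x _ => Finset.sum_congr rfl fun a _ => ?_
          have hce : (Fin.consEquiv fun _ => Fin m) (a, x) = Fin.cons a x := rfl
          rw [hce, hM a x]
          by_cases hae : a = extR x c 0
          · rw [if_pos hae, if_pos hae, pow_add, pow_one]
          · rw [if_neg hae, if_neg hae, zero_add, one_mul]
      _ = (θ + m - 1) ^ (k + 1) := by
          have h2 : ∀ x : Fin k → Fin m,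
              ∑ a : Fin m, (if a = extR x c 0 then θ else 1) * θ ^ mR x c
                = (θ + m - 1) * θ ^ mR x c := by
            intro x
            rw [← Finset.sum_mul, sum_if_eq_fin]
          rw [Finset.sum_congr rfl fun x _ => h2 x, ← Finset.mul_sum, ih c, pow_succ]
          ring

private lemma sum_theta_L {m : ℕ} (θ : ℝ) :
    ∀ (k : ℕ) (c : Fin m), ∑ x : Fin k → Fin m, θ ^ mL c x = (θ + m - 1) ^ k := by
  intro k
  induction k with
  | zero => intro c; simp [mL]
  | succ k ih =>
    intro c
    rw [← Equiv.sum_comp (Fin.consEquiv fun _ => Fin m) (fun x => θ ^ mL c x),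
      Fintype.sum_prod_type]
    have hM : ∀ (a : Fin m) (x : Fin k → Fin m),
        mL c (Fin.cons a x) = (if c = a then 1 else 0) + mL a x := by
      intro a x
      rw [mL, Finset.sum_range_succ' _ k]
      have h0 : (if extL c (Fin.cons a x) 0 = extL c (Fin.cons a x) (0 + 1) then (1:ℕ) else 0)
          = if c = a then 1 else 0 := by
        rw [extL_zero, extL_cons c a x (by omega : (0:ℕ) ≤ k), extL_zero]
      have hsh : ∀ t ∈ Finset.range k,
          (if extL c (Fin.cons a x) (t + 1) = extL c (Fin.cons a x) (t + 1 + 1) then (1:ℕ) else 0)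
            = if extL a x t = extL a x (t + 1) then 1 else 0 := by
        intro t ht
        rw [extL_cons c a x (by have := Finset.mem_range.1 ht; omega : t ≤ k),
          extL_cons c a x (by have := Finset.mem_range.1 ht; omega : t + 1 ≤ k)]
      rw [Finset.sum_congr rfl hsh, h0, add_comm, ← mL]
    calc ∑ a : Fin m, ∑ x : Fin k → Fin m, θ ^ mL c ((Fin.consEquiv fun _ => Fin m) (a, x))
        = ∑ a : Fin m, (if a = c then θ else 1) * ∑ x : Fin k → Fin m, θ ^ mL a x := by
          refine Finset.sum_congr rfl fun a _ => ?_
          rw [Finset.mul_sum]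
          refine Finset.sum_congr rfl fun x _ => ?_
          have hce : (Fin.consEquiv fun _ => Fin m) (a, x) = Fin.cons a x := rfl
          rw [hce, hM a x]
          by_cases hae : c = a
          · rw [if_pos hae, if_pos hae.symm, pow_add, pow_one]
          · rw [if_neg hae, if_neg (fun hh => hae hh.symm), zero_add, one_mul]
      _ = (θ + m - 1) ^ (k + 1) := by
          have h2 : ∀ a : Fin m, (∑ x : Fin k → Fin m, θ ^ mL a x) = (θ + m - 1) ^ k :=
            fun a => ih a
          rw [Finset.sum_congr rfl fun a _ => by rw [h2 a], ← Finset.sum_mul,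
            sum_if_eq_fin, pow_succ]
          ring

private lemma sum_range_two_mul {β : Type*} [AddCommMonoid β] (k : ℕ) (f : ℕ → β) :
    ∑ s ∈ Finset.range (2 * k), f s = ∑ t ∈ Finset.range k, (f (2 * t) + f (2 * t + 1)) := by
  induction k with
  | zero => simp
  | succ k ih =>
    have h2 : 2 * (k + 1) = 2 * k + 1 + 1 := by ring
    rw [h2, Finset.sum_range_succ, Finset.sum_range_succ, ih, Finset.sum_range_succ, add_assoc]

private def Wf (m N : ℕ) (w : Fin (N + 1) → Fin (m + 1)) (s : ℕ) : Fin (m + 1) :=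
  w ⟨s % (N + 1), Nat.mod_lt s (Nat.succ_pos N)⟩

private lemma Wf_eq {m N : ℕ} (w : Fin (N + 1) → Fin (m + 1)) {s : ℕ} (h : s < N + 1) :
    Wf m N w s = w ⟨s, h⟩ := by
  unfold Wf; congr 1; exact Fin.ext (Nat.mod_eq_of_lt h)

private def phiR (m k : ℕ) (j : Fin (m + 1)) (x : Fin k → Fin m) :
    Fin (2 * k + 1 + 1) → Fin (m + 1) := fun s =>
  if (s : ℕ) % 2 = 0 then 0
  else if h : (s : ℕ) / 2 < k then Fin.succ (x ⟨(s : ℕ) / 2, h⟩) else j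

private lemma phiR_even {m k : ℕ} (j : Fin (m + 1)) (x : Fin k → Fin m) {s : Fin (2 * k + 1 + 1)}
    (h : (s : ℕ) % 2 = 0) : phiR m k j x s = 0 := if_pos h

private lemma phiR_odd {m k : ℕ} {j : Fin (m + 1)} (hj : j ≠ 0) (x : Fin k → Fin m)
    (t : ℕ) (ht : t ≤ k) (hlt : 2 * t + 1 < 2 * k + 1 + 1) :
    phiR m k j x ⟨2 * t + 1, hlt⟩ = Fin.succ (extR x (j.pred hj) t) := by
  show (if (2 * t + 1) % 2 = 0 then (0 : Fin (m + 1))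
      else if h : (2 * t + 1) / 2 < k then Fin.succ (x ⟨(2 * t + 1) / 2, h⟩) else j)
    = Fin.succ (extR x (j.pred hj) t)
  rw [if_neg (by omega)]
  unfold extR
  by_cases h2 : t < k
  · rw [dif_pos (show (2 * t + 1) / 2 < k by omega), dif_pos h2]
    congr 1
    exact congrArg x (Fin.ext (show (2 * t + 1) / 2 = t by omega))
  · rw [dif_neg (show ¬ (2 * t + 1) / 2 < k by omega), dif_neg h2, Fin.succ_pred]

private def phiL (m k : ℕ) (i : Fin (m + 1)) (x : Fin k → Fin m) :
    Fin (2 * k + 1 + 1) → Fin (m + 1) := fun s =>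
  if (s : ℕ) % 2 = 1 then 0
  else if h : 0 < (s : ℕ) / 2 ∧ (s : ℕ) / 2 ≤ k then
    Fin.succ (x ⟨(s : ℕ) / 2 - 1, by omega⟩) else i

private lemma phiL_odd {m k : ℕ} (i : Fin (m + 1)) (x : Fin k → Fin m) {s : Fin (2 * k + 1 + 1)}
    (h : (s : ℕ) % 2 = 1) : phiL m k i x s = 0 := if_pos h

private lemma phiL_even {m k : ℕ} {i : Fin (m + 1)} (hi : i ≠ 0) (x : Fin k → Fin m)
    (t : ℕ) (ht : t ≤ k) (hlt : 2 * t < 2 * k + 1 + 1) :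
    phiL m k i x ⟨2 * t, hlt⟩ = Fin.succ (extL (i.pred hi) x t) := by
  show (if (2 * t) % 2 = 1 then (0 : Fin (m + 1))
      else if h : 0 < (2 * t) / 2 ∧ (2 * t) / 2 ≤ k then
        Fin.succ (x ⟨(2 * t) / 2 - 1, by omega⟩) else i)
    = Fin.succ (extL (i.pred hi) x t)
  rw [if_neg (by omega)]
  unfold extL
  by_cases h2 : 0 < t
  · rw [dif_pos (show 0 < (2 * t) / 2 ∧ (2 * t) / 2 ≤ k by omega),
      dif_pos (by omega : 0 < t ∧ t ≤ k)]
    congr 1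
    exact congrArg x (Fin.ext (show (2 * t) / 2 - 1 = t - 1 by omega))
  · rw [dif_neg (show ¬ (0 < (2 * t) / 2 ∧ (2 * t) / 2 ≤ k) by omega),
      dif_neg (by omega : ¬ (0 < t ∧ t ≤ k)), Fin.succ_pred]

/-- Theorem 5.1(i): on the star graph `S_{1,m}`, the odd BTDW count matrices satisfy
`q_{2k+1}(A) = η^k A` where `η = θ(θ + m − 1)`. -/
theorem btdw_star_odd (m : ℕ) (hm : 1 ≤ m) (θ : ℝ) (hθ0 : 0 ≤ θ) (hθ1 : θ ≤ 1)
    (η : ℝ) (hη : η = θ * (θ + m - 1)) (k : ℕ) :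
    btdwCount (starAdj m) θ (2 * k + 1) = η ^ k • starAdj m := by
  subst hη
  ext i j
  rw [Matrix.smul_apply, smul_eq_mul]
  have hL : btdwCount (starAdj m) θ (2 * k + 1) i j
      = ∑ w : Fin (2 * k + 1 + 1) → Fin (m + 1),
          if Wf m (2 * k + 1) w 0 = i ∧ Wf m (2 * k + 1) w (2 * k + 1) = j ∧
              ∀ s ∈ Finset.range (2 * k + 1),
                starAdj m (Wf m (2 * k + 1) w s) (Wf m (2 * k + 1) w (s + 1)) = 1
          then θ ^ ((Finset.range (2 * k + 1 - 1)).filter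
              fun s => Wf m (2 * k + 1) w s = Wf m (2 * k + 1) w (s + 2)).card
          else 0 := rfl
  rw [hL]
  by_cases hi : i = 0 <;> by_cases hj : j = 0
  · -- i = 0, j = 0
    subst hi; subst hj
    rw [show starAdj m 0 0 = 0 by simp [starAdj], mul_zero]
    refine Finset.sum_eq_zero fun w _ => ?_
    rw [if_neg]
    rintro ⟨h0, hK, hsteps⟩
    have := (star_alt0 hsteps h0 (2 * k + 1) le_rfl).1 hK
    omega
  · -- i = 0, j ≠ 0 : hub → leaf
    subst hi
    refine ((Finset.sum_of_injOn (s := (Finset.univ : Finset (Fin k → Fin m)))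
        (f := fun x => θ ^ (k + mR x (j.pred hj))) (phiR m k j) ?_ ?_ ?_ ?_).symm).trans ?_
    · -- InjOn
      intro x _ y _ hxy
      funext t
      have ht : 2 * (t : ℕ) + 1 < 2 * k + 1 + 1 := by have := t.isLt; omega
      have h1 := congrFun hxy ⟨2 * (t : ℕ) + 1, ht⟩
      rw [phiR_odd hj x (t : ℕ) (by have := t.isLt; omega) ht,
        phiR_odd hj y (t : ℕ) (by have := t.isLt; omega) ht] at h1
      have h2 := Fin.succ_inj.1 h1
      have e1 : extR x (j.pred hj) (t : ℕ) = x ⟨(t : ℕ), t.isLt⟩ := dif_pos t.isLt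
      have e2 : extR y (j.pred hj) (t : ℕ) = y ⟨(t : ℕ), t.isLt⟩ := dif_pos t.isLt
      rw [e1, e2] at h2
      simpa using h2
    · exact fun x _ => Finset.mem_coe.2 (Finset.mem_univ _)
    · -- vanishing off the image
      intro w _ hw
      rw [if_neg]
      rintro ⟨h0, hK, hsteps⟩
      apply hw
      have halt := star_alt0 hsteps h0
      have hnz : ∀ t : Fin k, w ⟨2 * (t : ℕ) + 1, by have := t.isLt; omega⟩ ≠ 0 := by
        intro t hz
        have hlt : 2 * (t : ℕ) + 1 < 2 * k + 1 + 1 := by have := t.isLt; omega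
        have h1 : Wf m (2 * k + 1) w (2 * (t : ℕ) + 1) = 0 := by
          rw [Wf_eq w hlt]; exact hz
        have := (halt (2 * (t : ℕ) + 1) (by omega)).1 h1
        omega
      refine ⟨fun t => (w ⟨2 * (t : ℕ) + 1, by have := t.isLt; omega⟩).pred (hnz t),
        by simp, ?_⟩
      funext s
      rcases Nat.even_or_odd (s : ℕ) with he | ho
      · rw [phiR_even j _ (Nat.even_iff.mp he)]
        have h1 := (halt (s : ℕ) (by have := s.isLt; omega)).2 (Nat.even_iff.mp he)
        rw [Wf_eq w s.isLt] at h1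
        exact h1.symm
      · have ho' := Nat.odd_iff.mp ho
        have hs2 : (s : ℕ) = 2 * ((s : ℕ) / 2) + 1 := by omega
        have hlt : 2 * ((s : ℕ) / 2) + 1 < 2 * k + 1 + 1 := by have := s.isLt; omega
        have hse : s = ⟨2 * ((s : ℕ) / 2) + 1, hlt⟩ := Fin.ext hs2
        rw [hse, phiR_odd hj _ ((s : ℕ) / 2) (by omega) hlt]
        by_cases htk : (s : ℕ) / 2 < k
        · have e1 : extR (fun t' : Fin k =>
              (w ⟨2 * (t' : ℕ) + 1, by have := t'.isLt; omega⟩).pred (hnz t'))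
              (j.pred hj) ((s : ℕ) / 2)
              = (w ⟨2 * ((s : ℕ) / 2) + 1, hlt⟩).pred (hnz ⟨(s : ℕ) / 2, htk⟩) := dif_pos htk
          rw [e1, Fin.succ_pred]
        · have e1 : extR (fun t' : Fin k =>
              (w ⟨2 * (t' : ℕ) + 1, by have := t'.isLt; omega⟩).pred (hnz t'))
              (j.pred hj) ((s : ℕ) / 2) = j.pred hj := dif_neg htk
          rw [e1, Fin.succ_pred]
          have h1 : Wf m (2 * k + 1) w (2 * k + 1) = j := hK
          rw [Wf_eq w (by omega : 2 * k + 1 < 2 * k + 1 + 1)] at h1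
          rw [show (⟨2 * ((s : ℕ) / 2) + 1, hlt⟩ : Fin (2 * k + 1 + 1))
            = ⟨2 * k + 1, by omega⟩ from Fin.ext (show 2 * ((s : ℕ) / 2) + 1 = 2 * k + 1 by omega)]
          exact h1.symm
    · -- weights agree
      intro x _
      have hW : ∀ (s : ℕ) (hs : s < 2 * k + 1 + 1),
          Wf m (2 * k + 1) (phiR m k j x) s = phiR m k j x ⟨s, hs⟩ := fun s hs =>
        Wf_eq (phiR m k j x) hs
      have heven : ∀ u : ℕ, u < 2 * k + 1 + 1 → u % 2 = 0 →
          Wf m (2 * k + 1) (phiR m k j x) u = 0 := by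
        intro u hu hu2
        rw [hW u hu]
        exact phiR_even j x hu2
      have hodd : ∀ t : ℕ, t ≤ k →
          Wf m (2 * k + 1) (phiR m k j x) (2 * t + 1)
            = Fin.succ (extR x (j.pred hj) t) := by
        intro t ht
        rw [hW (2 * t + 1) (by omega)]
        exact phiR_odd hj x t ht (by omega)
      have hcond : Wf m (2 * k + 1) (phiR m k j x) 0 = 0 ∧
          Wf m (2 * k + 1) (phiR m k j x) (2 * k + 1) = j ∧
          ∀ s ∈ Finset.range (2 * k + 1),
            starAdj m (Wf m (2 * k + 1) (phiR m k j x) s)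
              (Wf m (2 * k + 1) (phiR m k j x) (s + 1)) = 1 := by
        refine ⟨heven 0 (by omega) (by omega), ?_, ?_⟩
        · have h1 := hodd k le_rfl
          rw [show extR x (j.pred hj) k = j.pred hj from dif_neg (lt_irrefl k),
            Fin.succ_pred] at h1
          exact h1
        · intro s hs
          have hs' := Finset.mem_range.1 hs
          rcases Nat.even_or_odd s with he | ho
          · have he' := Nat.even_iff.mp he
            have h1 := heven s (by omega) he'
            have h2 := hodd (s / 2) (by omega)
            rw [show 2 * (s / 2) + 1 = s + 1 from by omega] at h2
            rw [h1, h2]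
            exact star_edge' (Or.inl ⟨rfl, Fin.succ_ne_zero _⟩)
          · have ho' := Nat.odd_iff.mp ho
            have h1 := hodd (s / 2) (by omega)
            rw [show 2 * (s / 2) + 1 = s from by omega] at h1
            have h2 := heven (s + 1) (by omega) (by omega)
            rw [h1, h2]
            exact star_edge' (Or.inr ⟨Fin.succ_ne_zero _, rfl⟩)
      rw [if_pos hcond]
      congr 1
      have h21 : 2 * k + 1 - 1 = 2 * k := by omega
      rw [h21, Finset.card_filter, sum_range_two_mul]
      have hterm : ∀ t ∈ Finset.range k,
          ((if Wf m (2 * k + 1) (phiR m k j x) (2 * t) =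
              Wf m (2 * k + 1) (phiR m k j x) (2 * t + 2) then 1 else 0)
           + (if Wf m (2 * k + 1) (phiR m k j x) (2 * t + 1) =
              Wf m (2 * k + 1) (phiR m k j x) (2 * t + 1 + 2) then 1 else 0))
          = 1 + (if extR x (j.pred hj) t = extR x (j.pred hj) (t + 1) then 1 else 0) := by
        intro t ht
        have htk := Finset.mem_range.1 ht
        have e0 := heven (2 * t) (by omega) (by omega)
        have e2 := heven (2 * t + 2) (by omega) (by omega)
        have o1 := hodd t (by omega)
        have o3 := hodd (t + 1) (by omega)
        rw [show 2 * (t + 1) + 1 = 2 * t + 1 + 2 from by omega] at o3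
        rw [e0, e2, o1, o3, if_pos rfl, if_congr Fin.succ_inj rfl rfl]
      rw [Finset.sum_congr rfl hterm, Finset.sum_add_distrib]
      simp [mR]
    · -- numeric conclusion
      rw [show starAdj m 0 j = 1 from star_edge' (Or.inl ⟨rfl, hj⟩), mul_one]
      have hsplit : ∀ x : Fin k → Fin m, θ ^ (k + mR x (j.pred hj))
          = θ ^ k * θ ^ mR x (j.pred hj) := fun x => pow_add θ k _
      rw [Finset.sum_congr rfl fun x _ => hsplit x, ← Finset.mul_sum,
        sum_theta_R θ k (j.pred hj), ← mul_pow]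
  · -- i ≠ 0, j = 0 : leaf → hub
    subst hj
    refine ((Finset.sum_of_injOn (s := (Finset.univ : Finset (Fin k → Fin m)))
        (f := fun x => θ ^ (k + mL (i.pred hi) x)) (phiL m k i) ?_ ?_ ?_ ?_).symm).trans ?_
    · -- InjOn
      intro x _ y _ hxy
      funext t
      have ht : 2 * ((t : ℕ) + 1) < 2 * k + 1 + 1 := by have := t.isLt; omega
      have h1 := congrFun hxy ⟨2 * ((t : ℕ) + 1), ht⟩
      rw [phiL_even hi x ((t : ℕ) + 1) (by have := t.isLt; omega) ht,
        phiL_even hi y ((t : ℕ) + 1) (by have := t.isLt; omega) ht] at h1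
      have h2 := Fin.succ_inj.1 h1
      have hc : 0 < (t : ℕ) + 1 ∧ (t : ℕ) + 1 ≤ k := by have := t.isLt; omega
      have e1 : extL (i.pred hi) x ((t : ℕ) + 1) = x ⟨(t : ℕ), t.isLt⟩ := dif_pos hc
      have e2 : extL (i.pred hi) y ((t : ℕ) + 1) = y ⟨(t : ℕ), t.isLt⟩ := dif_pos hc
      rw [e1, e2] at h2
      simpa using h2
    · exact fun x _ => Finset.mem_coe.2 (Finset.mem_univ _)
    · -- vanishing off the image
      intro w _ hw
      rw [if_neg]
      rintro ⟨h0, hK, hsteps⟩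
      apply hw
      have h0' : Wf m (2 * k + 1) w 0 ≠ 0 := by rw [h0]; exact hi
      have halt := star_alt1 hsteps h0'
      have hnz : ∀ t : Fin k, w ⟨2 * ((t : ℕ) + 1), by have := t.isLt; omega⟩ ≠ 0 := by
        intro t hz
        have hlt : 2 * ((t : ℕ) + 1) < 2 * k + 1 + 1 := by have := t.isLt; omega
        have h1 : Wf m (2 * k + 1) w (2 * ((t : ℕ) + 1)) = 0 := by
          rw [Wf_eq w hlt]; exact hz
        have := (halt (2 * ((t : ℕ) + 1)) (by omega)).1 h1
        omega
      refine ⟨fun t => (w ⟨2 * ((t : ℕ) + 1), by have := t.isLt; omega⟩).pred (hnz t),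
        by simp, ?_⟩
      funext s
      rcases Nat.even_or_odd (s : ℕ) with he | ho
      · have he' := Nat.even_iff.mp he
        have hlt : 2 * ((s : ℕ) / 2) < 2 * k + 1 + 1 := by have := s.isLt; omega
        have hse : s = ⟨2 * ((s : ℕ) / 2), hlt⟩ :=
          Fin.ext (show (s : ℕ) = 2 * ((s : ℕ) / 2) by omega)
        rw [hse, phiL_even hi _ ((s : ℕ) / 2) (by have := s.isLt; omega) hlt]
        by_cases ht0 : 0 < (s : ℕ) / 2
        · have hsk : (s : ℕ) / 2 ≤ k := by have := s.isLt; omega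
          have hc : 0 < (s : ℕ) / 2 ∧ (s : ℕ) / 2 ≤ k := ⟨ht0, hsk⟩
          have e1 : extL (i.pred hi) (fun t' : Fin k =>
              (w ⟨2 * ((t' : ℕ) + 1), by have := t'.isLt; omega⟩).pred (hnz t'))
              ((s : ℕ) / 2)
              = (w ⟨2 * (((s : ℕ) / 2 - 1) + 1), by omega⟩).pred
                  (hnz ⟨(s : ℕ) / 2 - 1, by omega⟩) := dif_pos hc
          rw [e1, Fin.succ_pred]
          exact congrArg w (Fin.ext
            (show 2 * (((s : ℕ) / 2 - 1) + 1) = 2 * ((s : ℕ) / 2) by omega))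
        · have e1 : extL (i.pred hi) (fun t' : Fin k =>
              (w ⟨2 * ((t' : ℕ) + 1), by have := t'.isLt; omega⟩).pred (hnz t'))
              ((s : ℕ) / 2) = i.pred hi := dif_neg (by omega)
          rw [e1, Fin.succ_pred]
          have h1 : Wf m (2 * k + 1) w 0 = i := h0
          rw [Wf_eq w (by omega : 0 < 2 * k + 1 + 1)] at h1
          rw [show (⟨2 * ((s : ℕ) / 2), hlt⟩ : Fin (2 * k + 1 + 1)) = ⟨0, by omega⟩ from
            Fin.ext (show 2 * ((s : ℕ) / 2) = 0 by omega)]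
          exact h1.symm
      · have ho' := Nat.odd_iff.mp ho
        rw [phiL_odd i _ ho']
        have h1 := (halt (s : ℕ) (by have := s.isLt; omega)).2 ho'
        rw [Wf_eq w s.isLt] at h1
        exact h1.symm
    · -- weights agree
      intro x _
      have hW : ∀ (s : ℕ) (hs : s < 2 * k + 1 + 1),
          Wf m (2 * k + 1) (phiL m k i x) s = phiL m k i x ⟨s, hs⟩ := fun s hs =>
        Wf_eq (phiL m k i x) hs
      have hev : ∀ t : ℕ, t ≤ k →
          Wf m (2 * k + 1) (phiL m k i x) (2 * t) = Fin.succ (extL (i.pred hi) x t) := by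
        intro t htk
        rw [hW (2 * t) (by omega)]
        exact phiL_even hi x t htk (by omega)
      have hod : ∀ u : ℕ, u < 2 * k + 1 + 1 → u % 2 = 1 →
          Wf m (2 * k + 1) (phiL m k i x) u = 0 := by
        intro u hu hu2
        rw [hW u hu]
        exact phiL_odd i x hu2
      have hcond : Wf m (2 * k + 1) (phiL m k i x) 0 = i ∧
          Wf m (2 * k + 1) (phiL m k i x) (2 * k + 1) = 0 ∧
          ∀ s ∈ Finset.range (2 * k + 1),
            starAdj m (Wf m (2 * k + 1) (phiL m k i x) s)
              (Wf m (2 * k + 1) (phiL m k i x) (s + 1)) = 1 := by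
        refine ⟨?_, hod (2 * k + 1) (by omega) (by omega), ?_⟩
        · have h1 := hev 0 (by omega)
          rw [show 2 * 0 = 0 from by omega] at h1
          rw [extL_zero, Fin.succ_pred] at h1
          exact h1
        · intro s hs
          have hs' := Finset.mem_range.1 hs
          rcases Nat.even_or_odd s with he | ho
          · have he' := Nat.even_iff.mp he
            have h1 := hev (s / 2) (by omega)
            rw [show 2 * (s / 2) = s from by omega] at h1
            have h2 := hod (s + 1) (by omega) (by omega)
            rw [h1, h2]
            exact star_edge' (Or.inr ⟨Fin.succ_ne_zero _, rfl⟩)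
          · have ho' := Nat.odd_iff.mp ho
            have h1 := hod s (by omega) ho'
            have h2 := hev ((s + 1) / 2) (by omega)
            rw [show 2 * ((s + 1) / 2) = s + 1 from by omega] at h2
            rw [h1, h2]
            exact star_edge' (Or.inl ⟨rfl, Fin.succ_ne_zero _⟩)
      rw [if_pos hcond]
      congr 1
      have h21 : 2 * k + 1 - 1 = 2 * k := by omega
      rw [h21, Finset.card_filter, sum_range_two_mul]
      have hterm : ∀ t ∈ Finset.range k,
          ((if Wf m (2 * k + 1) (phiL m k i x) (2 * t) =
              Wf m (2 * k + 1) (phiL m k i x) (2 * t + 2) then 1 else 0)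
           + (if Wf m (2 * k + 1) (phiL m k i x) (2 * t + 1) =
              Wf m (2 * k + 1) (phiL m k i x) (2 * t + 1 + 2) then 1 else 0))
          = (if extL (i.pred hi) x t = extL (i.pred hi) x (t + 1) then 1 else 0) + 1 := by
        intro t ht
        have htk := Finset.mem_range.1 ht
        have e0 := hev t (by omega)
        have e2 := hev (t + 1) (by omega)
        rw [show 2 * (t + 1) = 2 * t + 2 from by omega] at e2
        have o1 := hod (2 * t + 1) (by omega) (by omega)
        have o3 := hod (2 * t + 1 + 2) (by omega) (by omega)
        rw [e0, e2, o1, o3, if_pos rfl, if_congr Fin.succ_inj rfl rfl]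
      rw [Finset.sum_congr rfl hterm, Finset.sum_add_distrib,
        show (∑ _t ∈ Finset.range k, (1 : ℕ)) = k by simp,
        show (∑ t ∈ Finset.range k,
          if extL (i.pred hi) x t = extL (i.pred hi) x (t + 1) then (1 : ℕ) else 0)
            = mL (i.pred hi) x from rfl]
      exact add_comm k (mL (i.pred hi) x)
    · -- numeric conclusion
      rw [show starAdj m i 0 = 1 from star_edge' (Or.inr ⟨hi, rfl⟩), mul_one]
      have hsplit : ∀ x : Fin k → Fin m, θ ^ (k + mL (i.pred hi) x)
          = θ ^ k * θ ^ mL (i.pred hi) x := fun x => pow_add θ k _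
      rw [Finset.sum_congr rfl fun x _ => hsplit x, ← Finset.mul_sum,
        sum_theta_L θ k (i.pred hi), ← mul_pow]
  · -- i ≠ 0, j ≠ 0
    rw [show starAdj m i j = 0 by simp [starAdj, hi, hj], mul_zero]
    refine Finset.sum_eq_zero fun w _ => ?_
    rw [if_neg]
    rintro ⟨h0, hK, hsteps⟩
    have h0' : Wf m (2 * k + 1) w 0 ≠ 0 := by rw [h0]; exact hi
    have hz := (star_alt1 hsteps h0' (2 * k + 1) le_rfl).2 (by omega)
    rw [hK] at hz
    exact hj hz

end Aux
end

section
/- If α ≥ 0 satisfies α·ρ(Z) < 1, where ρ(Z) is the spectral radius of the block matrix Z, then the matrix power series Σ_{k=0}^∞ α^k q_k(A) converges. -/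
open Matrix Finset

/-- The block matrix `Z = [[0, I, 0], [0, 0, I], [−μ²(A−S), μ(μI−D), A]]` with `μ = 1 − θ`. -/
noncomputable def Zmat {n : ℕ} (A : Matrix (Fin n) (Fin n) ℝ) (θ : ℝ) :
    Matrix ((Fin n ⊕ Fin n) ⊕ Fin n) ((Fin n ⊕ Fin n) ⊕ Fin n) ℝ :=
  Matrix.fromBlocks
    (Matrix.fromBlocks 0 1 0 0)
    (Matrix.fromRows 0 1)
    (Matrix.fromCols (-((1 - θ) ^ 2) • (A - recipMat A)) ((1 - θ) • ((1 - θ) • 1 - degDiag A)))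
    A

/-- Stack three `n × n` matrices vertically into a `3n × n` matrix. -/
noncomputable def stack3 {n : ℕ} (X Y W : Matrix (Fin n) (Fin n) ℝ) :
    Matrix ((Fin n ⊕ Fin n) ⊕ Fin n) (Fin n) ℝ :=
  Matrix.fromRows (Matrix.fromRows X Y) W

open Matrix Finset

namespace BTDWProof

open scoped Classical

variable {n : ℕ}

/-- Product of adjacency entries along a walk. -/
noncomputable def pfA (A : Matrix (Fin n) (Fin n) ℝ) (k : ℕ) (w : ℕ → Fin n) : ℝ :=
  ∏ s ∈ Finset.range k, A (w s) (w (s + 1))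

/-- Product of backtracking penalties along a walk. -/
noncomputable def pfC (θ : ℝ) (k : ℕ) (w : ℕ → Fin n) : ℝ :=
  ∏ s ∈ Finset.range (k - 1), (if w s = w (s + 2) then θ else 1)

/-- Weight of a walk. -/
noncomputable def pf (A : Matrix (Fin n) (Fin n) ℝ) (θ : ℝ) (k : ℕ) (w : ℕ → Fin n) : ℝ :=
  pfA A k w * pfC θ k w

/-- Extension of a tuple to ℕ by mod. -/
def ext (k : ℕ) (w : Fin (k + 1) → Fin n) : ℕ → Fin n :=
  fun s => w ⟨s % (k + 1), Nat.mod_lt s (Nat.succ_pos k)⟩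

lemma ext_apply (k : ℕ) (w : Fin (k + 1) → Fin n) {s : ℕ} (h : s ≤ k) :
    ext k w s = w ⟨s, Nat.lt_succ_of_le h⟩ := by
  simp only [ext]
  congr 1
  exact Fin.ext (Nat.mod_eq_of_lt (Nat.lt_succ_of_le h))

lemma ext_zero (k : ℕ) (w : Fin (k + 1) → Fin n) : ext k w 0 = w 0 := by
  rw [ext_apply k w (Nat.zero_le k)]
  congr 1

lemma ext_last (k : ℕ) (w : Fin (k + 1) → Fin n) : ext k w k = w (Fin.last k) := by
  rw [ext_apply k w le_rfl]
  rfl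

lemma ext_one (k : ℕ) (w : Fin (k + 2) → Fin n) : ext (k + 1) w 1 = w 1 := by
  rw [ext_apply (k + 1) w (by omega)]
  congr 1

noncomputable def Qm (A : Matrix (Fin n) (Fin n) ℝ) (θ : ℝ) (k : ℕ) :
    Matrix (Fin n) (Fin n) ℝ :=
  Matrix.of fun i j => ∑ w : Fin (k + 1) → Fin n,
    (if w 0 = i then (1 : ℝ) else 0) * (if w (Fin.last k) = j then 1 else 0) *
      pf A θ k (ext k w)

noncomputable def Gt (A : Matrix (Fin n) (Fin n) ℝ) (θ : ℝ) (k : ℕ) (m i j : Fin n) : ℝ :=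
  ∑ w : Fin (k + 1) → Fin n,
    (if w 0 = m then (1 : ℝ) else 0) * (if ext k w 1 = i then 1 else 0) *
      (if w (Fin.last k) = j then 1 else 0) * pf A θ k (ext k w)

lemma btdw_eq (A : Matrix (Fin n) (Fin n) ℝ) (hA01 : ∀ i j, A i j = 0 ∨ A i j = 1)
    (θ : ℝ) (k : ℕ) : btdwCount A θ k = Qm A θ k := by
  ext i j
  simp only [btdwCount, Qm, Matrix.of_apply]
  refine Finset.sum_congr rfl fun w _ => ?_
  show (if ext k w 0 = i ∧ ext k w k = j ∧
        (∀ s ∈ Finset.range k, A (ext k w s) (ext k w (s + 1)) = 1)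
      then θ ^ ((Finset.range (k - 1)).filter fun s => ext k w s = ext k w (s + 2)).card
      else 0) = _
  have hA : pfA A k (ext k w)
      = if (∀ s ∈ Finset.range k, A (ext k w s) (ext k w (s + 1)) = 1) then 1 else 0 := by
    split
    next h => exact Finset.prod_eq_one fun s hs => h s hs
    next h =>
      push_neg at h
      obtain ⟨s, hs, hne⟩ := h
      refine Finset.prod_eq_zero hs ?_
      rcases hA01 (ext k w s) (ext k w (s + 1)) with h' | h'
      · exact h'
      · exact absurd h' hne
  have hC : pfC θ k (ext k w)
      = θ ^ ((Finset.range (k - 1)).filter fun s => ext k w s = ext k w (s + 2)).card := by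
    rw [pfC, ← Finset.prod_filter_mul_prod_filter_not (Finset.range (k - 1))
      (fun s => ext k w s = ext k w (s + 2))]
    rw [Finset.prod_congr rfl (fun s hs => if_pos (Finset.mem_filter.mp hs).2),
      Finset.prod_congr rfl (fun s hs => if_neg (Finset.mem_filter.mp hs).2),
      Finset.prod_const, Finset.prod_const_one, mul_one]
  have e0 : ext k w 0 = w 0 := ext_zero k w
  have ek : ext k w k = w (Fin.last k) := ext_last k w
  rw [pf, hA, hC, ← e0, ← ek]
  by_cases h1 : ext k w 0 = i <;> by_cases h2 : ext k w k = j <;>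
    by_cases h3 : (∀ s ∈ Finset.range k, A (ext k w s) (ext k w (s + 1)) = 1) <;>
    simp [h1, h2, h3]


lemma sum_split (k : ℕ) (f : (Fin (k + 2) → Fin n) → ℝ) :
    ∑ w : Fin (k + 2) → Fin n, f w
      = ∑ x : Fin n, ∑ v : Fin (k + 1) → Fin n, f (Fin.cons x v) := by
  rw [← Equiv.sum_comp (Fin.consEquiv (fun _ : Fin (k + 2) => Fin n)) f,
    Fintype.sum_prod_type]
  rfl

lemma cons_zero' (k : ℕ) (x : Fin n) (v : Fin (k + 1) → Fin n) :
    Fin.cons (α := fun _ : Fin (k + 2) => Fin n) x v 0 = x := rfl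

lemma cons_last (k : ℕ) (x : Fin n) (v : Fin (k + 1) → Fin n) :
    Fin.cons (α := fun _ : Fin (k + 2) => Fin n) x v (Fin.last (k + 1)) = v (Fin.last k) := by
  rw [← Fin.succ_last, Fin.cons_succ]

lemma ext_cons_succ (k : ℕ) (x : Fin n) (v : Fin (k + 1) → Fin n) {s : ℕ} (h : s ≤ k) :
    ext (k + 1) (Fin.cons x v) (s + 1) = ext k v s := by
  rw [ext_apply (k + 1) _ (by omega : s + 1 ≤ k + 1), ext_apply k v h]
  have : (⟨s + 1, by omega⟩ : Fin (k + 2)) = Fin.succ ⟨s, by omega⟩ := rfl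
  rw [this, Fin.cons_succ]

lemma ext_cons_zero (k : ℕ) (x : Fin n) (v : Fin (k + 1) → Fin n) :
    ext (k + 1) (Fin.cons x v) 0 = x := by
  rw [ext_zero]; rfl

lemma pf_congr (A : Matrix (Fin n) (Fin n) ℝ) (θ : ℝ) (k : ℕ) {w w' : ℕ → Fin n}
    (h : ∀ s ≤ k, w s = w' s) : pf A θ k w = pf A θ k w' := by
  unfold pf pfA pfC
  congr 1
  · refine Finset.prod_congr rfl fun s hs => ?_
    rw [Finset.mem_range] at hs
    rw [h s (by omega), h (s + 1) (by omega)]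
  · refine Finset.prod_congr rfl fun s hs => ?_
    rw [Finset.mem_range] at hs
    rw [h s (by omega), h (s + 2) (by omega)]

lemma pf_zero (A : Matrix (Fin n) (Fin n) ℝ) (θ : ℝ) (w : ℕ → Fin n) : pf A θ 0 w = 1 := by
  simp [pf, pfA, pfC]

lemma pf_one (A : Matrix (Fin n) (Fin n) ℝ) (θ : ℝ) (w : ℕ → Fin n) :
    pf A θ 1 w = A (w 0) (w 1) := by
  simp [pf, pfA, pfC]

lemma pf_succ (A : Matrix (Fin n) (Fin n) ℝ) (θ : ℝ) (k : ℕ) (w : ℕ → Fin n) :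
    pf A θ (k + 2) w
      = A (w 0) (w 1) * (if w 0 = w 2 then θ else 1) * pf A θ (k + 1) (fun s => w (s + 1)) := by
  have hA : pfA A (k + 2) w = A (w 0) (w 1) * pfA A (k + 1) (fun s => w (s + 1)) := by
    rw [pfA, Finset.prod_range_succ' (fun s => A (w s) (w (s + 1))) (k + 1), mul_comm]
    rfl
  have hC : pfC θ (k + 2) w
      = (if w 0 = w 2 then θ else 1) * pfC θ (k + 1) (fun s => w (s + 1)) := by
    show (∏ s ∈ Finset.range (k + 1), if w s = w (s + 2) then θ else 1) = _
    rw [Finset.prod_range_succ' (fun s => if w s = w (s + 2) then θ else 1) k, mul_comm]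
    rfl
  rw [pf, hA, hC, pf]
  ring

/-- Weight of a peeled walk. -/
lemma pf_peel (A : Matrix (Fin n) (Fin n) ℝ) (θ : ℝ) (k : ℕ) (x : Fin n)
    (v : Fin (k + 2) → Fin n) :
    pf A θ (k + 2) (ext (k + 2) (Fin.cons x v))
      = A x (v 0) * (if x = v 1 then θ else 1) * pf A θ (k + 1) (ext (k + 1) v) := by
  rw [pf_succ]
  have h0 : ext (k + 2) (Fin.cons x v) 0 = x := ext_cons_zero (k + 1) x v
  have h1 : ext (k + 2) (Fin.cons x v) 1 = v 0 := by
    rw [ext_cons_succ (k + 1) x v (by omega : 0 ≤ k + 1), ext_zero]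
  have h2 : ext (k + 2) (Fin.cons x v) 2 = v 1 := by
    show ext (k + 2) (Fin.cons x v) (1 + 1) = v 1
    rw [ext_cons_succ (k + 1) x v (by omega : 1 ≤ k + 1), ext_one]
  rw [h0, h1, h2]
  congr 1
  exact pf_congr A θ (k + 1) fun s hs => ext_cons_succ (k + 1) x v (by omega)


lemma ext_cons_one (k : ℕ) (x : Fin n) (v : Fin (k + 2) → Fin n) :
    ext (k + 2) (Fin.cons x v) 1 = v 0 := by
  show ext (k + 2) (Fin.cons x v) (0 + 1) = v 0
  rw [ext_cons_succ (k + 1) x v (by omega : 0 ≤ k + 1), ext_zero]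

lemma if_eq_comm (a b : Fin n) (x y : ℝ) : (if a = b then x else y) = if b = a then x else y := by
  by_cases h : a = b
  · rw [if_pos h, if_pos h.symm]
  · rw [if_neg h, if_neg fun hh => h hh.symm]

lemma Qm_rec1 (A : Matrix (Fin n) (Fin n) ℝ) (θ : ℝ) (k : ℕ) (i j : Fin n) :
    Qm A θ (k + 2) i j
      = (∑ m, A i m * Qm A θ (k + 1) m j)
        - (1 - θ) * ∑ m, A i m * Gt A θ (k + 1) m i j := by
  have hL : Qm A θ (k + 2) i j = ∑ v : Fin (k + 2) → Fin n,
      (if v (Fin.last (k + 1)) = j then (1:ℝ) else 0) *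
        (A i (v 0) * ((if i = v 1 then θ else 1) * pf A θ (k + 1) (ext (k + 1) v))) := by
    show (∑ w : Fin (k + 3) → Fin n, (if w 0 = i then (1:ℝ) else 0) *
        (if w (Fin.last (k + 2)) = j then 1 else 0) * pf A θ (k + 2) (ext (k + 2) w)) = _
    rw [sum_split (k + 1)]
    have hstep : ∀ x : Fin n, ∀ v : Fin (k + 2) → Fin n, ∀ w : Fin (k + 3) → Fin n,
        w = Fin.cons x v →
        (if w 0 = i then (1:ℝ) else 0) *
          (if w (Fin.last (k + 2)) = j then 1 else 0) *
            pf A θ (k + 2) (ext (k + 2) w)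
        = if x = i then ((if v (Fin.last (k + 1)) = j then (1:ℝ) else 0) *
            (A x (v 0) * ((if x = v 1 then θ else 1) * pf A θ (k + 1) (ext (k + 1) v))))
          else 0 := by
      intro x v w hw
      subst hw
      rw [Fin.cons_zero, cons_last (k + 1) x v, pf_peel]
      by_cases hx : x = i
      · rw [if_pos hx, if_pos hx, hx]; ring
      · rw [if_neg hx, if_neg hx]; ring
    calc (∑ x : Fin n, ∑ v : Fin (k + 2) → Fin n, _) = _ := by
          refine Finset.sum_congr rfl fun x _ => Finset.sum_congr rfl fun v _ => hstep x v _ rfl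
      _ = _ := by
          rw [Finset.sum_comm]
          refine Finset.sum_congr rfl fun v _ => ?_
          rw [Finset.sum_ite_eq' Finset.univ i]
          simp
  have hR1 : (∑ m, A i m * Qm A θ (k + 1) m j)
      = ∑ v : Fin (k + 2) → Fin n,
          (if v (Fin.last (k + 1)) = j then (1:ℝ) else 0) *
            (A i (v 0) * pf A θ (k + 1) (ext (k + 1) v)) := by
    simp only [Qm, Matrix.of_apply, Finset.mul_sum]
    rw [Finset.sum_comm]
    refine Finset.sum_congr rfl fun v _ => ?_
    have : ∀ m : Fin n, A i m * ((if v 0 = m then (1:ℝ) else 0) *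
        (if v (Fin.last (k + 1)) = j then 1 else 0) * pf A θ (k + 1) (ext (k + 1) v))
        = if v 0 = m then ((if v (Fin.last (k + 1)) = j then (1:ℝ) else 0) *
            (A i m * pf A θ (k + 1) (ext (k + 1) v))) else 0 := by
      intro m
      by_cases hm : v 0 = m
      · rw [if_pos hm, if_pos hm]; ring
      · rw [if_neg hm, if_neg hm]; ring
    rw [Finset.sum_congr rfl fun m _ => this m, Finset.sum_ite_eq Finset.univ (v 0)]
    simp
  have hR2 : (∑ m, A i m * Gt A θ (k + 1) m i j)
      = ∑ v : Fin (k + 2) → Fin n,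
          (if v (Fin.last (k + 1)) = j then (1:ℝ) else 0) * ((if v 1 = i then 1 else 0) *
            (A i (v 0) * pf A θ (k + 1) (ext (k + 1) v))) := by
    simp only [Gt, Finset.mul_sum]
    rw [Finset.sum_comm]
    refine Finset.sum_congr rfl fun v _ => ?_
    have : ∀ m : Fin n, A i m * ((if v 0 = m then (1:ℝ) else 0) *
        (if ext (k + 1) v 1 = i then 1 else 0) *
        (if v (Fin.last (k + 1)) = j then 1 else 0) * pf A θ (k + 1) (ext (k + 1) v))
        = if v 0 = m then ((if v (Fin.last (k + 1)) = j then (1:ℝ) else 0) *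
            ((if v 1 = i then 1 else 0) * (A i m * pf A θ (k + 1) (ext (k + 1) v)))) else 0 := by
      intro m
      rw [ext_one]
      by_cases hm : v 0 = m
      · rw [if_pos hm, if_pos hm]; ring
      · rw [if_neg hm, if_neg hm]; ring
    rw [Finset.sum_congr rfl fun m _ => this m, Finset.sum_ite_eq Finset.univ (v 0)]
    simp
  rw [hL, hR1, hR2, Finset.mul_sum, ← Finset.sum_sub_distrib]
  refine Finset.sum_congr rfl fun v _ => ?_
  rw [if_eq_comm i (v 1)]
  by_cases h1 : v (Fin.last (k + 1)) = j <;> by_cases h2 : v 1 = i <;>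
    simp only [if_pos, if_neg, h1, h2, if_true, if_false] <;> ring

lemma Gt_rec (A : Matrix (Fin n) (Fin n) ℝ) (θ : ℝ) (k : ℕ) (m i j : Fin n) :
    Gt A θ (k + 2) m i j
      = A m i * (Qm A θ (k + 1) i j - (1 - θ) * Gt A θ (k + 1) i m j) := by
  have hL : Gt A θ (k + 2) m i j = ∑ v : Fin (k + 2) → Fin n,
      (if v 0 = i then (1:ℝ) else 0) * ((if v (Fin.last (k + 1)) = j then 1 else 0) *
        (A m (v 0) * ((if m = v 1 then θ else 1) * pf A θ (k + 1) (ext (k + 1) v)))) := by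
    show (∑ w : Fin (k + 3) → Fin n, (if w 0 = m then (1:ℝ) else 0) *
        (if ext (k + 2) w 1 = i then 1 else 0) *
        (if w (Fin.last (k + 2)) = j then 1 else 0) * pf A θ (k + 2) (ext (k + 2) w)) = _
    rw [sum_split (k + 1)]
    have hstep : ∀ x : Fin n, ∀ v : Fin (k + 2) → Fin n, ∀ w : Fin (k + 3) → Fin n,
        w = Fin.cons x v →
        (if w 0 = m then (1:ℝ) else 0) *
          (if ext (k + 2) w 1 = i then 1 else 0) *
          (if w (Fin.last (k + 2)) = j then 1 else 0) *
            pf A θ (k + 2) (ext (k + 2) w)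
        = if x = m then ((if v 0 = i then (1:ℝ) else 0) *
            ((if v (Fin.last (k + 1)) = j then 1 else 0) *
            (A x (v 0) * ((if x = v 1 then θ else 1) * pf A θ (k + 1) (ext (k + 1) v)))))
          else 0 := by
      intro x v w hw
      subst hw
      rw [Fin.cons_zero, cons_last (k + 1) x v, pf_peel, ext_cons_one]
      by_cases hx : x = m
      · rw [if_pos hx, if_pos hx, hx]; ring
      · rw [if_neg hx, if_neg hx]; ring
    calc (∑ x : Fin n, ∑ v : Fin (k + 2) → Fin n, _) = _ := by
          refine Finset.sum_congr rfl fun x _ => Finset.sum_congr rfl fun v _ => hstep x v _ rfl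
      _ = _ := by
          rw [Finset.sum_comm]
          refine Finset.sum_congr rfl fun v _ => ?_
          rw [Finset.sum_ite_eq' Finset.univ m]
          simp
  rw [hL]
  have hQ : Qm A θ (k + 1) i j = ∑ v : Fin (k + 2) → Fin n,
      (if v 0 = i then (1:ℝ) else 0) * (if v (Fin.last (k + 1)) = j then 1 else 0) *
        pf A θ (k + 1) (ext (k + 1) v) := rfl
  have hG : Gt A θ (k + 1) i m j = ∑ v : Fin (k + 2) → Fin n,
      (if v 0 = i then (1:ℝ) else 0) * (if v 1 = m then 1 else 0) *
        (if v (Fin.last (k + 1)) = j then 1 else 0) * pf A θ (k + 1) (ext (k + 1) v) := by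
    refine Finset.sum_congr rfl fun v _ => ?_
    rw [ext_one]
  rw [hQ, hG, mul_sub, Finset.mul_sum, Finset.mul_sum, Finset.mul_sum, ← Finset.sum_sub_distrib]
  refine Finset.sum_congr rfl fun v _ => ?_
  rw [if_eq_comm m (v 1)]
  by_cases h0 : v 0 = i <;> by_cases h1 : v (Fin.last (k + 1)) = j <;>
    by_cases h2 : v 1 = m <;>
    simp only [h0, h1, h2, if_true, if_false] <;> first
      | ring
      | (rw [h0]; ring)


lemma Gt_factor (A : Matrix (Fin n) (Fin n) ℝ) (hA01 : ∀ i j, A i j = 0 ∨ A i j = 1)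
    (θ : ℝ) (k : ℕ) (m i j : Fin n) :
    A m i * Gt A θ (k + 1) m i j = Gt A θ (k + 1) m i j := by
  rcases hA01 m i with h | h
  · rw [Gt, Finset.mul_sum]
    refine Finset.sum_congr rfl fun w _ => ?_
    by_cases h0 : w 0 = m
    · by_cases h1 : ext (k + 1) w 1 = i
      · have hpf : pf A θ (k + 1) (ext (k + 1) w) = 0 := by
          rw [pf, pfA]
          have hz : A (ext (k + 1) w 0) (ext (k + 1) w (0 + 1)) = 0 := by
            have e0 : ext (k + 1) w 0 = m := by rw [ext_zero, h0]
            have e1 : ext (k + 1) w (0 + 1) = i := by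
              show ext (k + 1) w 1 = i
              exact h1
            rw [e0, e1, h]
          rw [Finset.prod_eq_zero (Finset.mem_range.mpr (Nat.succ_pos k)) hz, zero_mul]
        rw [hpf]; ring
      · rw [if_neg h1]; ring
    · rw [if_neg h0]; ring
  · rw [h, one_mul]

lemma Em_exp (A : Matrix (Fin n) (Fin n) ℝ) (θ : ℝ) (k : ℕ) (i j : Fin n) :
    (∑ m, A i m * Gt A θ (k + 2) m i j)
      = (∑ m, A i m * A m i) * Qm A θ (k + 1) i j
        - (1 - θ) * ∑ m, (A i m * A m i) * Gt A θ (k + 1) i m j := by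
  have key : ∀ m, A i m * Gt A θ (k + 2) m i j
      = (A i m * A m i) * Qm A θ (k + 1) i j
        - (1 - θ) * ((A i m * A m i) * Gt A θ (k + 1) i m j) := by
    intro m
    rw [Gt_rec]
    ring
  rw [Finset.sum_congr rfl fun m _ => key m, Finset.sum_sub_distrib, Finset.sum_mul,
    ← Finset.mul_sum]

lemma Hm_exp (A : Matrix (Fin n) (Fin n) ℝ) (hA01 : ∀ i j, A i j = 0 ∨ A i j = 1)
    (θ : ℝ) (k : ℕ) (i j : Fin n) :
    (∑ m, (A i m * A m i) * Gt A θ (k + 2) i m j)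
      = (∑ m, (A i m * A m i) * Qm A θ (k + 1) m j)
        - (1 - θ) * ∑ m, A i m * Gt A θ (k + 1) m i j := by
  have key : ∀ m, (A i m * A m i) * Gt A θ (k + 2) i m j
      = (A i m * A m i) * Qm A θ (k + 1) m j
        - (1 - θ) * (A i m * Gt A θ (k + 1) m i j) := by
    intro m
    have h3 := Gt_factor A hA01 θ k m i j
    rcases hA01 i m with h | h
    · rw [Gt_rec, h]; ring
    · rw [Gt_rec, h]
      linear_combination (-(1 - θ)) * h3
  rw [Finset.sum_congr rfl fun m _ => key m, Finset.sum_sub_distrib, ← Finset.mul_sum]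

lemma Qm_rec_matrix (A : Matrix (Fin n) (Fin n) ℝ) (hA01 : ∀ i j, A i j = 0 ∨ A i j = 1)
    (θ : ℝ) (k : ℕ) :
    Qm A θ (k + 4)
      = (-((1 - θ) ^ 2) • (A - recipMat A)) * Qm A θ (k + 1)
        + ((1 - θ) • ((1 - θ) • (1 : Matrix (Fin n) (Fin n) ℝ) - degDiag A)) * Qm A θ (k + 2)
        + A * Qm A θ (k + 3) := by
  have hdiag : (1 - θ) • ((1 - θ) • (1 : Matrix (Fin n) (Fin n) ℝ) - degDiag A)
      = Matrix.diagonal (fun i => (1 - θ) * ((1 - θ) - (A * A) i i)) := by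
    ext a b
    by_cases hab : a = b <;>
      simp [degDiag, Matrix.diagonal_apply, Matrix.one_apply, hab, mul_sub]
  ext i j
  have h1 := Qm_rec1 A θ (k + 2) i j
  have h2 := Em_exp A θ (k + 1) i j
  have h3 := Hm_exp A hA01 θ k i j
  have h4 := Qm_rec1 A θ k i j
  simp only [show k + 2 + 2 = k + 4 from rfl, show k + 2 + 1 = k + 3 from rfl,
    show k + 1 + 2 = k + 3 from rfl, show k + 1 + 1 = k + 2 from rfl] at h1 h2 h3 h4
  have hmid : (((1 - θ) • ((1 - θ) • (1 : Matrix (Fin n) (Fin n) ℝ) - degDiag A))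
      * Qm A θ (k + 2)) i j
      = (1 - θ) * ((1 - θ) - (∑ m, A i m * A m i)) * Qm A θ (k + 2) i j := by
    rw [hdiag, Matrix.diagonal_mul, Matrix.mul_apply]
  have hthird : ((-((1 - θ) ^ 2) • (A - recipMat A)) * Qm A θ (k + 1)) i j
      = -((1 - θ) ^ 2) * ((∑ m, A i m * Qm A θ (k + 1) m j)
          - ∑ m, (A i m * A m i) * Qm A θ (k + 1) m j) := by
    rw [Matrix.smul_mul, Matrix.sub_mul, Matrix.smul_apply, Matrix.sub_apply,
      Matrix.mul_apply, Matrix.mul_apply]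
    simp only [recipMat, Matrix.of_apply, smul_eq_mul]
  have hfirst : (A * Qm A θ (k + 3)) i j = ∑ m, A i m * Qm A θ (k + 3) m j :=
    Matrix.mul_apply
  rw [Matrix.add_apply, Matrix.add_apply, hmid, hthird, hfirst, h1, h2, h3]
  linear_combination (-(1 - θ) ^ 2) * h4


lemma Z_mul_stack3 (A : Matrix (Fin n) (Fin n) ℝ) (θ : ℝ) (X Y W : Matrix (Fin n) (Fin n) ℝ) :
    Zmat A θ * stack3 X Y W
      = stack3 Y W ((-((1 - θ) ^ 2) • (A - recipMat A)) * X
          + ((1 - θ) • ((1 - θ) • (1 : Matrix (Fin n) (Fin n) ℝ) - degDiag A)) * Y + A * W) := by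
  rw [Zmat, stack3, Matrix.fromBlocks_mul_fromRows, Matrix.fromBlocks_mul_fromRows,
    Matrix.fromCols_mul_fromRows, stack3, Matrix.fromRows_mul]
  ext i j
  rcases i with (i | i) | i <;> simp

lemma Zpow_mul_stack3 (A : Matrix (Fin n) (Fin n) ℝ) (hA01 : ∀ i j, A i j = 0 ∨ A i j = 1)
    (θ : ℝ) (k : ℕ) :
    (Zmat A θ) ^ k * stack3 (Qm A θ 1) (Qm A θ 2) (Qm A θ 3)
      = stack3 (Qm A θ (k + 1)) (Qm A θ (k + 2)) (Qm A θ (k + 3)) := by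
  induction k with
  | zero => rw [pow_zero, Matrix.one_mul]
  | succ k ih =>
    rw [pow_succ', Matrix.mul_assoc, ih, Z_mul_stack3,
      show k + 1 + 1 = k + 2 from rfl, show k + 1 + 2 = k + 3 from rfl,
      show k + 1 + 3 = k + 4 from rfl, ← Qm_rec_matrix A hA01 θ k]


section Spectral

open Filter
open scoped Topology

attribute [local instance] Matrix.linftyOpNormedAddCommGroup Matrix.linftyOpNormedRing
  Matrix.linftyOpNormedAlgebra

lemma entry_le_norm {N : Type*} [Fintype N] [DecidableEq N] (M : Matrix N N ℂ) (i j : N) :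
    ‖M i j‖ ≤ ‖M‖ := by
  have h1 : ‖M i j‖₊ ≤ ∑ j' : N, ‖M i j'‖₊ :=
    Finset.single_le_sum (f := fun j' => ‖M i j'‖₊) (fun _ _ => zero_le) (Finset.mem_univ j)
  have h2 : (∑ j' : N, ‖M i j'‖₊) ≤ Finset.univ.sup (fun i' => ∑ j' : N, ‖M i' j'‖₊) :=
    Finset.le_sup (f := fun i' => ∑ j' : N, ‖M i' j'‖₊) (Finset.mem_univ i)
  have h : ‖M i j‖₊ ≤ ‖M‖₊ := by
    rw [Matrix.linfty_opNNNorm_def]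
    exact le_trans h1 h2
  exact_mod_cast h

lemma entry_growth {N : Type*} [Fintype N] [DecidableEq N] (M : Matrix N N ℂ) (t : ℝ)
    (ht0 : 0 < t) (ht : spectralRadius ℂ M < ENNReal.ofReal t) :
    ∃ C : ℝ, 0 < C ∧ ∀ (k : ℕ) (i j : N), ‖(M ^ k) i j‖ ≤ C * t ^ k := by
  have hgel := spectrum.pow_nnnorm_pow_one_div_tendsto_nhds_spectralRadius M
  have hev : ∀ᶠ k : ℕ in atTop, ((‖M ^ k‖₊ : ENNReal) ^ (1 / (k : ℝ))) < ENNReal.ofReal t :=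
    hgel.eventually_lt_const ht
  obtain ⟨K, hK⟩ := eventually_atTop.mp hev
  have hnorm : ∀ k, K ≤ k → 1 ≤ k → ‖M ^ k‖ ≤ t ^ k := by
    intro k hk hk1
    have h := hK k hk
    have hkne : (k : ℝ) ≠ 0 := by positivity
    have h2 : ((‖M ^ k‖₊ : ENNReal) ^ (1 / (k : ℝ))) ^ (k : ℝ)
        < (ENNReal.ofReal t) ^ (k : ℝ) :=
      ENNReal.rpow_lt_rpow h (by positivity)
    rw [← ENNReal.rpow_mul, one_div, inv_mul_cancel₀ hkne, ENNReal.rpow_one] at h2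
    rw [ENNReal.ofReal_rpow_of_pos ht0, Real.rpow_natCast] at h2
    have h3 : (‖M ^ k‖₊ : ℝ) < t ^ k := by
      have := (ENNReal.lt_ofReal_iff_toReal_lt (by simp)).mp h2
      simpa using this
    exact le_of_lt h3
  obtain ⟨S, hS0, hSle⟩ : ∃ S : ℝ, 0 ≤ S ∧ ∀ m, m ≤ K → ‖M ^ m‖ / t ^ m ≤ S := by
    refine ⟨∑ m ∈ Finset.range (K + 1), ‖M ^ m‖ / t ^ m,
      Finset.sum_nonneg fun m _ => by positivity, fun m hm => ?_⟩
    exact Finset.single_le_sum (f := fun m => ‖M ^ m‖ / t ^ m) (fun m _ => by positivity)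
      (Finset.mem_range.mpr (by omega))
  refine ⟨S + 1, by linarith, fun k i j => ?_⟩
  have hbig : ‖M ^ k‖ ≤ (S + 1) * t ^ k := by
    have htk : (0 : ℝ) < t ^ k := by positivity
    by_cases hk : k ≤ K
    · have h2 : ‖M ^ k‖ / t ^ k ≤ S := hSle k hk
      have h3 : ‖M ^ k‖ ≤ S * t ^ k := by
        rw [div_le_iff₀ htk] at h2
        linarith
      nlinarith
    · have h1 : ‖M ^ k‖ ≤ t ^ k := hnorm k (by omega) (by omega)
      nlinarith
  exact le_trans (entry_le_norm _ i j) hbig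

end Spectral

end BTDWProof

/-- Theorem 6.1: if `α ρ(Z) < 1`, where `ρ(Z)` is the spectral radius of the block
matrix `Z`, then the power series `Σ α^k q_k(A)` converges. -/
theorem btdw_radius_of_convergence {n : ℕ} (hn : 1 ≤ n) (A : Matrix (Fin n) (Fin n) ℝ)
    (hA01 : ∀ i j, A i j = 0 ∨ A i j = 1) (hAdiag : ∀ i, A i i = 0)
    (θ : ℝ) (hθ0 : 0 ≤ θ) (hθ1 : θ ≤ 1) (α : ℝ) (hα : 0 ≤ α)
    (hρ : ENNReal.ofReal α * spectralRadius ℂ ((Zmat A θ).map Complex.ofReal) < 1) :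
    Summable fun k : ℕ => α ^ k • btdwCount A θ k := by
  classical
  have hfun : (fun k : ℕ => α ^ k • btdwCount A θ k)
      = fun k : ℕ => α ^ k • BTDWProof.Qm A θ k := by
    funext k
    rw [BTDWProof.btdw_eq A hA01 θ k]
  rw [hfun]
  rcases eq_or_lt_of_le hα with hα0 | hαpos
  · refine summable_of_ne_finset_zero (s := {0}) fun k hk => ?_
    have hk0 : k ≠ 0 := by simpa using hk
    rw [← hα0, zero_pow hk0, zero_smul]
  · have hρlt : spectralRadius ℂ ((Zmat A θ).map Complex.ofReal)
        < (ENNReal.ofReal α)⁻¹ := by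
      have hne : ENNReal.ofReal α ≠ 0 := ne_of_gt (ENNReal.ofReal_pos.mpr hαpos)
      rw [show (ENNReal.ofReal α)⁻¹ = 1 / ENNReal.ofReal α by rw [one_div],
        ENNReal.lt_div_iff_mul_lt (Or.inl hne) (Or.inl ENNReal.ofReal_ne_top), mul_comm]
      exact hρ
    obtain ⟨r, hr0, hρr, hrlt⟩ := ENNReal.lt_iff_exists_real_btwn.mp hρlt
    have hrpos : 0 < r := by
      by_contra h
      push_neg at h
      rw [ENNReal.ofReal_eq_zero.mpr h] at hρr
      exact (not_lt_of_ge zero_le) hρr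
    have hαr : α * r < 1 := by
      rw [← ENNReal.ofReal_inv_of_pos hαpos] at hrlt
      have h2 : r < α⁻¹ := (ENNReal.ofReal_lt_ofReal_iff (by positivity)).mp hrlt
      calc α * r < α * α⁻¹ := mul_lt_mul_of_pos_left h2 hαpos
        _ = 1 := mul_inv_cancel₀ (ne_of_gt hαpos)
    obtain ⟨C, hC0, hC⟩ := BTDWProof.entry_growth ((Zmat A θ).map Complex.ofReal) r hrpos hρr
    have hZk : ∀ (k : ℕ) (a b : (Fin n ⊕ Fin n) ⊕ Fin n),
        |((Zmat A θ) ^ k) a b| ≤ C * r ^ k := by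
      intro k a b
      have hmap : ((Zmat A θ).map Complex.ofReal) ^ k = ((Zmat A θ) ^ k).map Complex.ofReal := by
        have h := map_pow (Complex.ofRealHom.mapMatrix :
          Matrix ((Fin n ⊕ Fin n) ⊕ Fin n) ((Fin n ⊕ Fin n) ⊕ Fin n) ℝ →+* _) (Zmat A θ) k
        exact h.symm
      have h := hC k a b
      rw [hmap] at h
      simpa [Matrix.map_apply, Complex.norm_real, Real.norm_eq_abs] using h
    set V0 := stack3 (BTDWProof.Qm A θ 1) (BTDWProof.Qm A θ 2) (BTDWProof.Qm A θ 3) with hV0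
    obtain ⟨B, hB0, hB⟩ : ∃ B : ℝ, 0 ≤ B ∧ ∀ b j, |V0 b j| ≤ B := by
      refine ⟨∑ b, ∑ j, |V0 b j|,
        Finset.sum_nonneg fun b _ => Finset.sum_nonneg fun j _ => abs_nonneg _, fun b j => ?_⟩
      calc |V0 b j| ≤ ∑ j', |V0 b j'| :=
            Finset.single_le_sum (f := fun j' => |V0 b j'|) (fun _ _ => abs_nonneg _)
              (Finset.mem_univ j)
        _ ≤ ∑ b', ∑ j', |V0 b' j'| :=
            Finset.single_le_sum (f := fun b' => ∑ j', |V0 b' j'|)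
              (fun _ _ => Finset.sum_nonneg fun _ _ => abs_nonneg _) (Finset.mem_univ b)
    have hQb : ∀ (k : ℕ) (i j : Fin n), |BTDWProof.Qm A θ (k + 3) i j|
        ≤ (Fintype.card ((Fin n ⊕ Fin n) ⊕ Fin n)) * (C * r ^ k * B) := by
      intro k i j
      have hstack := BTDWProof.Zpow_mul_stack3 A hA01 θ k
      have h1 : BTDWProof.Qm A θ (k + 3) i j = ((Zmat A θ) ^ k * V0) (Sum.inr i) j := by
        rw [hV0, hstack]
        rfl
      rw [h1, Matrix.mul_apply]
      calc |∑ b, ((Zmat A θ) ^ k) (Sum.inr i) b * V0 b j|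
          ≤ ∑ b, |((Zmat A θ) ^ k) (Sum.inr i) b * V0 b j| := Finset.abs_sum_le_sum_abs _ _
        _ ≤ ∑ _b : (Fin n ⊕ Fin n) ⊕ Fin n, C * r ^ k * B := by
            refine Finset.sum_le_sum fun b _ => ?_
            rw [abs_mul]
            exact mul_le_mul (hZk k _ b) (hB b j) (abs_nonneg _) (by positivity)
        _ = (Fintype.card ((Fin n ⊕ Fin n) ⊕ Fin n)) * (C * r ^ k * B) := by
            rw [Finset.sum_const, nsmul_eq_mul, Finset.card_univ]
    have hsum : ∀ i j : Fin n, Summable fun k : ℕ => α ^ k * BTDWProof.Qm A θ k i j := by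
      intro i j
      rw [← summable_nat_add_iff 3]
      have hgeo : Summable fun k : ℕ =>
          (α ^ 3 * ((Fintype.card ((Fin n ⊕ Fin n) ⊕ Fin n)) * (C * B))) * (α * r) ^ k :=
        (summable_geometric_of_lt_one (by positivity) hαr).mul_left _
      refine Summable.of_norm_bounded hgeo fun k => ?_
      rw [Real.norm_eq_abs, abs_mul, abs_pow, abs_of_nonneg hα]
      calc α ^ (k + 3) * |BTDWProof.Qm A θ (k + 3) i j|
          ≤ α ^ (k + 3) * ((Fintype.card ((Fin n ⊕ Fin n) ⊕ Fin n)) * (C * r ^ k * B)) :=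
            mul_le_mul_of_nonneg_left (hQb k i j) (by positivity)
        _ = (α ^ 3 * ((Fintype.card ((Fin n ⊕ Fin n) ⊕ Fin n)) * (C * B))) * (α * r) ^ k := by
            ring
    have h2 : Summable fun k : ℕ =>
        ((α ^ k • BTDWProof.Qm A θ k : Matrix (Fin n) (Fin n) ℝ) : Fin n → Fin n → ℝ) := by
      refine Pi.summable.mpr ?_
      intro i
      rw [Pi.summable]
      intro j
      simpa [Matrix.smul_apply, smul_eq_mul] using hsum i j
    exact h2
end

section
/- For every k ≥ 0, the block matrix Z satisfies Z^k · [I; A; A² − μD] = [q_k(A); q_{k+1}(A); q_{k+2}(A)], where [X; Y; W] denotes the 3n×n matrix obtained by stacking the n×n blocks X, Y, W vertically and μ = 1 − θ. -/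
open Matrix Finset

open scoped Classical in
noncomputable def wterm {n : ℕ} (A : Matrix (Fin n) (Fin n) ℝ) (θ : ℝ) (k : ℕ)
    (c : Fin n → ℝ) (a j : Fin n) (w : Fin (k + 1) → Fin n) : ℝ :=
  if w ⟨0 % (k + 1), Nat.mod_lt 0 (Nat.succ_pos k)⟩ = a ∧
      w ⟨k % (k + 1), Nat.mod_lt k (Nat.succ_pos k)⟩ = j ∧
      (∀ s ∈ Finset.range k,
        A (w ⟨s % (k + 1), Nat.mod_lt s (Nat.succ_pos k)⟩)
          (w ⟨(s + 1) % (k + 1), Nat.mod_lt (s+1) (Nat.succ_pos k)⟩) = 1)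
  then c (w ⟨1 % (k + 1), Nat.mod_lt 1 (Nat.succ_pos k)⟩) *
    θ ^ ((Finset.range (k - 1)).filter fun s =>
        w ⟨s % (k + 1), Nat.mod_lt s (Nat.succ_pos k)⟩ =
        w ⟨(s + 2) % (k + 1), Nat.mod_lt (s+2) (Nat.succ_pos k)⟩).card
  else 0

open scoped Classical in
noncomputable def walkW {n : ℕ} (A : Matrix (Fin n) (Fin n) ℝ) (θ : ℝ) (k : ℕ)
    (c : Fin n → ℝ) (a j : Fin n) : ℝ :=
  ∑ w : Fin (k + 1) → Fin n, wterm A θ k c a j w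

lemma walkW_zero {n : ℕ} (A : Matrix (Fin n) (Fin n) ℝ) (θ : ℝ) (c : Fin n → ℝ) (a j : Fin n) :
    walkW A θ 0 c a j = if a = j then c a else 0 := by
  classical
  unfold walkW wterm
  rw [← (Equiv.funUnique (Fin 1) (Fin n)).symm.sum_comp]
  simp only [Equiv.funUnique_symm_apply, Function.const_apply]
  simp only [Finset.range_zero, Finset.notMem_empty, false_implies, implies_true, and_true,
    Finset.filter_empty, Finset.card_empty, pow_zero, mul_one]
  by_cases h : a = j
  · subst h; simp
  · rw [Finset.sum_eq_zero, if_neg h]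
    intro x _
    rw [if_neg]
    rintro ⟨rfl, rfl⟩
    exact h rfl

lemma cons_mod_zero {n k : ℕ} (x : Fin n) (v : Fin (k + 1) → Fin n)
    (h : 0 % (k + 2) < k + 2) :
    (Fin.cons x v : Fin (k + 2) → Fin n) ⟨0 % (k + 2), h⟩ = x := by
  have : (⟨0 % (k + 2), h⟩ : Fin (k + 2)) = 0 := by ext; simp
  rw [this, Fin.cons_zero]

lemma cons_mod_succ {n k : ℕ} (x : Fin n) (v : Fin (k + 1) → Fin n) (s : ℕ) (hs : s ≤ k)
    (h : (s + 1) % (k + 2) < k + 2) (h' : s % (k + 1) < k + 1) :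
    (Fin.cons x v : Fin (k + 2) → Fin n) ⟨(s + 1) % (k + 2), h⟩ = v ⟨s % (k + 1), h'⟩ := by
  have h1 : (⟨(s + 1) % (k + 2), h⟩ : Fin (k + 2)) = Fin.succ ⟨s % (k + 1), h'⟩ := by
    ext
    simp [Fin.succ, Nat.mod_eq_of_lt (by omega : s + 1 < k + 2),
      Nat.mod_eq_of_lt (by omega : s < k + 1)]
  rw [h1, Fin.cons_succ]

open scoped Classical in
lemma wterm_cons {n : ℕ} (A : Matrix (Fin n) (Fin n) ℝ)
    (hA01 : ∀ i j, A i j = 0 ∨ A i j = 1) (hAdiag : ∀ i, A i i = 0)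
    (θ : ℝ) (k : ℕ) (c : Fin n → ℝ) (a j : Fin n) (x : Fin n) (v : Fin (k + 1) → Fin n) :
    wterm A θ (k + 1) c a j (Fin.cons x v) =
      (if x = a then
        A a (v ⟨0 % (k + 1), Nat.mod_lt 0 (Nat.succ_pos k)⟩) *
          (c (v ⟨0 % (k + 1), Nat.mod_lt 0 (Nat.succ_pos k)⟩) *
            wterm A θ k (fun y => if y = a then θ else 1)
              (v ⟨0 % (k + 1), Nat.mod_lt 0 (Nat.succ_pos k)⟩) j v)
      else 0) := by
  classical
  set v0 : Fin n := v ⟨0 % (k + 1), Nat.mod_lt 0 (Nat.succ_pos k)⟩ with hv0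
  set v1 : Fin n := v ⟨1 % (k + 1), Nat.mod_lt 1 (Nat.succ_pos k)⟩ with hv1
  set vk : Fin n := v ⟨k % (k + 1), Nat.mod_lt k (Nat.succ_pos k)⟩ with hvk
  by_cases hx : x = a
  case neg =>
    rw [if_neg hx]
    unfold wterm
    rw [if_neg]
    rw [cons_mod_zero]
    rintro ⟨rfl, -⟩
    exact hx rfl
  case pos =>
    subst hx
    rw [if_pos rfl]
    unfold wterm
    -- identify the pieces of the cons walk
    have h0 : (Fin.cons x v : Fin (k + 2) → Fin n)
        ⟨0 % (k + 1 + 1), Nat.mod_lt 0 (Nat.succ_pos (k+1))⟩ = x := cons_mod_zero x v _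
    have hsucc : ∀ (s : ℕ), s ≤ k →
        (Fin.cons x v : Fin (k + 2) → Fin n)
          ⟨(s + 1) % (k + 1 + 1), Nat.mod_lt (s+1) (Nat.succ_pos (k+1))⟩
          = v ⟨s % (k + 1), Nat.mod_lt s (Nat.succ_pos k)⟩ :=
      fun s hs => cons_mod_succ x v s hs _ _
    have hk1 : (Fin.cons x v : Fin (k + 2) → Fin n)
        ⟨(k + 1) % (k + 1 + 1), Nat.mod_lt (k+1) (Nat.succ_pos (k+1))⟩ = vk := hsucc k le_rfl
    have h1 : (Fin.cons x v : Fin (k + 2) → Fin n)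
        ⟨1 % (k + 1 + 1), Nat.mod_lt 1 (Nat.succ_pos (k+1))⟩ = v0 := hsucc 0 (Nat.zero_le _)
    -- edge condition
    have hedge : (∀ s ∈ Finset.range (k + 1),
          A ((Fin.cons x v : Fin (k + 2) → Fin n) ⟨s % (k + 1 + 1), Nat.mod_lt s (Nat.succ_pos (k+1))⟩)
            ((Fin.cons x v : Fin (k + 2) → Fin n) ⟨(s + 1) % (k + 1 + 1), Nat.mod_lt (s+1) (Nat.succ_pos (k+1))⟩) = 1)
        ↔ (A x v0 = 1 ∧ ∀ s ∈ Finset.range k,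
            A (v ⟨s % (k + 1), Nat.mod_lt s (Nat.succ_pos k)⟩)
              (v ⟨(s + 1) % (k + 1), Nat.mod_lt (s+1) (Nat.succ_pos k)⟩) = 1) := by
      constructor
      · intro h
        refine ⟨?_, ?_⟩
        · have := h 0 (Finset.mem_range.mpr (Nat.succ_pos k))
          rwa [h0, h1] at this
        · intro s hs
          have hs' : s < k := Finset.mem_range.mp hs
          have := h (s + 1) (Finset.mem_range.mpr (by omega))
          rwa [hsucc s (by omega), hsucc (s + 1) (by omega)] at this
      · rintro ⟨he, hrest⟩ s hs
        have hs' : s < k + 1 := Finset.mem_range.mp hs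
        match s with
        | 0 => rw [h0, h1]; exact he
        | (t + 1) =>
          rw [hsucc t (by omega), hsucc (t + 1) (by omega)]
          exact hrest t (Finset.mem_range.mpr (by omega))
    -- backtracking count
    have hcount : ((Finset.range (k + 1 - 1)).filter fun s =>
          (Fin.cons x v : Fin (k + 2) → Fin n) ⟨s % (k + 1 + 1), Nat.mod_lt s (Nat.succ_pos (k+1))⟩ =
          (Fin.cons x v : Fin (k + 2) → Fin n) ⟨(s + 2) % (k + 1 + 1), Nat.mod_lt (s+2) (Nat.succ_pos (k+1))⟩).card
        = (if 0 < k ∧ x = v1 then 1 else 0) +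
          ((Finset.range (k - 1)).filter fun s =>
            v ⟨s % (k + 1), Nat.mod_lt s (Nat.succ_pos k)⟩ =
            v ⟨(s + 2) % (k + 1), Nat.mod_lt (s+2) (Nat.succ_pos k)⟩).card := by
      match k with
      | 0 => simp
      | (m + 1) =>
        rw [Finset.card_filter, Finset.card_filter]
        have hr : m + 1 + 1 - 1 = m + 1 := rfl
        rw [hr, Finset.sum_range_succ']
        have e0 : (if (Fin.cons x v : Fin (m + 3) → Fin n) ⟨0 % (m + 3), Nat.mod_lt 0 (Nat.succ_pos (m+2))⟩ =
              (Fin.cons x v : Fin (m + 3) → Fin n) ⟨(0 + 2) % (m + 3), Nat.mod_lt 2 (Nat.succ_pos (m+2))⟩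
            then (1:ℕ) else 0) = if 0 < m + 1 ∧ x = v1 then 1 else 0 := by
          have h2 : (Fin.cons x v : Fin (m + 3) → Fin n) ⟨(0 + 2) % (m + 3), Nat.mod_lt 2 (Nat.succ_pos (m+2))⟩ = v1 := by
            rw [hv1]; exact hsucc 1 (by omega)
          rw [h0, h2]
          simp [Nat.succ_pos]
        rw [e0]
        have eshift : ∀ s ∈ Finset.range m,
            (if (Fin.cons x v : Fin (m + 3) → Fin n) ⟨(s + 1) % (m + 3), Nat.mod_lt (s+1) (Nat.succ_pos (m+2))⟩ =
              (Fin.cons x v : Fin (m + 3) → Fin n) ⟨(s + 1 + 2) % (m + 3), Nat.mod_lt (s+1+2) (Nat.succ_pos (m+2))⟩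
            then (1:ℕ) else 0) =
            (if v ⟨s % (m + 2), Nat.mod_lt s (Nat.succ_pos (m+1))⟩ =
              v ⟨(s + 2) % (m + 2), Nat.mod_lt (s+2) (Nat.succ_pos (m+1))⟩ then (1:ℕ) else 0) := by
          intro s hs
          have hs' : s < m := Finset.mem_range.mp hs
          rw [hsucc s (by omega)]
          have : s + 1 + 2 = (s + 2) + 1 := by omega
          rw [this, hsucc (s + 2) (by omega)]
        rw [Finset.sum_congr rfl eshift]
        have : m + 1 - 1 = m := rfl
        rw [this, add_comm]
    rw [h0, hk1, h1]
    rw [hcount]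
    -- now pure case analysis
    rcases hA01 x v0 with hA | hA
    · rw [if_neg, hA, zero_mul]
      rw [hedge]
      rintro ⟨-, -, h, -⟩
      rw [hA] at h
      norm_num at h
    · rw [hA, one_mul]
      have hcondiff : (x = x ∧ vk = j ∧ (∀ s ∈ Finset.range (k + 1),
            A ((Fin.cons x v : Fin (k + 2) → Fin n) ⟨s % (k + 1 + 1), Nat.mod_lt s (Nat.succ_pos (k+1))⟩)
              ((Fin.cons x v : Fin (k + 2) → Fin n) ⟨(s + 1) % (k + 1 + 1), Nat.mod_lt (s+1) (Nat.succ_pos (k+1))⟩) = 1)) ↔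
          (v ⟨0 % (k + 1), Nat.mod_lt 0 (Nat.succ_pos k)⟩ = v0 ∧
            v ⟨k % (k + 1), Nat.mod_lt k (Nat.succ_pos k)⟩ = j ∧ (∀ s ∈ Finset.range k,
            A (v ⟨s % (k + 1), Nat.mod_lt s (Nat.succ_pos k)⟩)
              (v ⟨(s + 1) % (k + 1), Nat.mod_lt (s+1) (Nat.succ_pos k)⟩) = 1)) := by
        rw [hedge]
        constructor
        · rintro ⟨-, h2, -, h3⟩
          exact ⟨rfl, h2, h3⟩
        · rintro ⟨-, h2, h3⟩
          exact ⟨rfl, h2, hA, h3⟩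
      dsimp only
      by_cases hc : (v ⟨0 % (k + 1), Nat.mod_lt 0 (Nat.succ_pos k)⟩ = v0 ∧
            v ⟨k % (k + 1), Nat.mod_lt k (Nat.succ_pos k)⟩ = j ∧ (∀ s ∈ Finset.range k,
            A (v ⟨s % (k + 1), Nat.mod_lt s (Nat.succ_pos k)⟩)
              (v ⟨(s + 1) % (k + 1), Nat.mod_lt (s+1) (Nat.succ_pos k)⟩) = 1))
      · rw [if_pos (hcondiff.mpr hc), if_pos hc]
        by_cases hb : v ⟨1 % (k + 1), Nat.mod_lt 1 (Nat.succ_pos k)⟩ = x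
        · have hx1 : x = v1 := by rw [hv1]; exact hb.symm
          have hk0 : 0 < k := by
            by_contra hk
            have hk' : k = 0 := by omega
            have hv10 : v1 = v0 := by
              rw [hv1, hv0]
              apply congrArg v
              ext
              omega
            rw [hx1, hv10] at hA
            rw [hAdiag v0] at hA
            norm_num at hA
          rw [if_pos ⟨hk0, hx1⟩, if_pos hb, pow_add, pow_one]
        · rw [if_neg hb, if_neg, zero_add, one_mul]
          rintro ⟨-, hxx⟩
          apply hb
          rw [hv1] at hxx
          exact hxx.symm
      · rw [if_neg (fun hx => hc (hcondiff.mp hx)), if_neg hc, mul_zero]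

open scoped Classical in
lemma wterm_start_ne {n : ℕ} (A : Matrix (Fin n) (Fin n) ℝ) (θ : ℝ) (k : ℕ)
    (c : Fin n → ℝ) (m j : Fin n) (w : Fin (k + 1) → Fin n)
    (h : w ⟨0 % (k + 1), Nat.mod_lt 0 (Nat.succ_pos k)⟩ ≠ m) :
    wterm A θ k c m j w = 0 := by
  unfold wterm
  exact if_neg (fun hh => h hh.1)

lemma walkW_succ {n : ℕ} (A : Matrix (Fin n) (Fin n) ℝ)
    (hA01 : ∀ i j, A i j = 0 ∨ A i j = 1) (hAdiag : ∀ i, A i i = 0)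
    (θ : ℝ) (k : ℕ) (c : Fin n → ℝ) (a j : Fin n) :
    walkW A θ (k + 1) c a j
      = ∑ m, A a m * (c m * walkW A θ k (fun y => if y = a then θ else 1) m j) := by
  classical
  trans (∑ v : Fin (k + 1) → Fin n,
      A a (v ⟨0 % (k + 1), Nat.mod_lt 0 (Nat.succ_pos k)⟩) *
        (c (v ⟨0 % (k + 1), Nat.mod_lt 0 (Nat.succ_pos k)⟩) *
          wterm A θ k (fun y => if y = a then θ else 1)
            (v ⟨0 % (k + 1), Nat.mod_lt 0 (Nat.succ_pos k)⟩) j v))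
  · unfold walkW
    rw [← Equiv.sum_comp (Fin.consEquiv fun _ : Fin (k + 2) => Fin n)
        (wterm A θ (k + 1) c a j), Fintype.sum_prod_type]
    have key : ∀ (x : Fin n) (v : Fin (k + 1) → Fin n),
        wterm A θ (k + 1) c a j ((Fin.consEquiv fun _ : Fin (k + 2) => Fin n) (x, v))
          = if x = a then
              A a (v ⟨0 % (k + 1), Nat.mod_lt 0 (Nat.succ_pos k)⟩) *
                (c (v ⟨0 % (k + 1), Nat.mod_lt 0 (Nat.succ_pos k)⟩) *
                  wterm A θ k (fun y => if y = a then θ else 1)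
                    (v ⟨0 % (k + 1), Nat.mod_lt 0 (Nat.succ_pos k)⟩) j v)
            else 0 := by
      intro x v
      have hce : ((Fin.consEquiv fun _ : Fin (k + 2) => Fin n) (x, v)) = Fin.cons x v := rfl
      rw [hce]
      have := wterm_cons A hA01 hAdiag θ k c a j x v
      -- wterm_cons states wterm of cons; the inner wterm start argument matches
      convert this using 2
    rw [Finset.sum_congr rfl fun x _ => Finset.sum_congr rfl fun v _ => key x v]
    rw [Finset.sum_comm]
    refine Finset.sum_congr rfl fun v _ => ?_
    rw [Finset.sum_ite_eq' Finset.univ a]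
    simp
  · unfold walkW
    have push : ∀ m : Fin n, A a m * (c m * ∑ w : Fin (k + 1) → Fin n,
          wterm A θ k (fun y => if y = a then θ else 1) m j w)
        = ∑ w : Fin (k + 1) → Fin n,
            A a m * (c m * wterm A θ k (fun y => if y = a then θ else 1) m j w) := by
      intro m
      rw [Finset.mul_sum, Finset.mul_sum]
    rw [Finset.sum_congr rfl fun m _ => push m, Finset.sum_comm]
    refine Finset.sum_congr rfl fun v _ => ?_
    rw [Finset.sum_eq_single (v ⟨0 % (k + 1), Nat.mod_lt 0 (Nat.succ_pos k)⟩)]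
    · intro m _ hm
      rw [wterm_start_ne A θ k _ m j v (fun hh => hm hh.symm)]
      ring
    · intro hmem
      exact absurd (Finset.mem_univ _) hmem


lemma walkW_btf {n : ℕ} (A : Matrix (Fin n) (Fin n) ℝ) (θ : ℝ) (k : ℕ) (a m j : Fin n) :
    walkW A θ k (fun y => if y = a then θ else 1) m j
      = walkW A θ k (fun _ => 1) m j
        - (1 - θ) * walkW A θ k (fun y => if y = a then 1 else 0) m j := by
  classical
  unfold walkW wterm
  rw [Finset.mul_sum, ← Finset.sum_sub_distrib]
  refine Finset.sum_congr rfl fun w _ => ?_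
  beta_reduce
  split_ifs with h1 h2 <;> ring

lemma recQ {n : ℕ} (A : Matrix (Fin n) (Fin n) ℝ)
    (hA01 : ∀ i j, A i j = 0 ∨ A i j = 1) (hAdiag : ∀ i, A i i = 0)
    (θ : ℝ) (k : ℕ) (a j : Fin n) :
    walkW A θ (k + 1) (fun _ => 1) a j
      = ∑ m, A a m * walkW A θ k (fun _ => 1) m j
        - (1 - θ) * ∑ m, A a m * walkW A θ k (fun y => if y = a then 1 else 0) m j := by
  classical
  rw [walkW_succ A hA01 hAdiag θ k _ a j]
  have e : ∀ m ∈ Finset.univ, A a m * ((fun _ : Fin n => (1:ℝ)) m * walkW A θ k (fun y => if y = a then θ else 1) m j)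
      = A a m * walkW A θ k (fun _ => 1) m j
        - (1 - θ) * (A a m * walkW A θ k (fun y => if y = a then 1 else 0) m j) := by
    intro m _
    rw [walkW_btf]
    ring
  rw [Finset.sum_congr rfl e, Finset.sum_sub_distrib, ← Finset.mul_sum]

lemma recF {n : ℕ} (A : Matrix (Fin n) (Fin n) ℝ)
    (hA01 : ∀ i j, A i j = 0 ∨ A i j = 1) (hAdiag : ∀ i, A i i = 0)
    (θ : ℝ) (k : ℕ) (i a j : Fin n) :
    walkW A θ (k + 1) (fun y => if y = i then 1 else 0) a j
      = A a i * (walkW A θ k (fun _ => 1) i j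
          - (1 - θ) * walkW A θ k (fun y => if y = a then 1 else 0) i j) := by
  classical
  rw [walkW_succ A hA01 hAdiag θ k _ a j]
  have e : ∀ m ∈ Finset.univ, A a m * ((fun y : Fin n => if y = i then (1:ℝ) else 0) m * walkW A θ k (fun y => if y = a then θ else 1) m j)
      = if m = i then A a i * walkW A θ k (fun y => if y = a then θ else 1) i j else 0 := by
    intro m _
    beta_reduce
    by_cases hm : m = i
    · subst hm; rw [if_pos rfl, if_pos rfl]; ring
    · rw [if_neg hm, if_neg hm]; ring
  rw [Finset.sum_congr rfl e, Finset.sum_ite_eq' Finset.univ i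
    (fun _ => A a i * walkW A θ k (fun y => if y = a then θ else 1) i j),
    if_pos (Finset.mem_univ i), walkW_btf]

lemma recQ4 {n : ℕ} (A : Matrix (Fin n) (Fin n) ℝ)
    (hA01 : ∀ i j, A i j = 0 ∨ A i j = 1) (hAdiag : ∀ i, A i i = 0)
    (θ : ℝ) (k : ℕ) (i j : Fin n) :
    walkW A θ (k + 3) (fun _ => 1) i j
      = ∑ m, A i m * walkW A θ (k + 2) (fun _ => 1) m j
        - (1 - θ) * ((∑ m, A i m * A m i) - (1 - θ)) * walkW A θ (k + 1) (fun _ => 1) i j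
        - (1 - θ) ^ 2 * ∑ m, (A i m - A i m * A m i) * walkW A θ k (fun _ => 1) m j := by
  classical
  have n1 : k + 1 + 1 = k + 2 := rfl
  have n2 : k + 2 + 1 = k + 3 := rfl
  have e1 := recQ A hA01 hAdiag θ (k + 2) i j
  rw [n2] at e1
  have e4 := recQ A hA01 hAdiag θ k i j
  have e2 : ∑ m, A i m * walkW A θ (k + 2) (fun y => if y = i then 1 else 0) m j
      = (∑ m, A i m * A m i) * walkW A θ (k + 1) (fun _ => 1) i j
        - (1 - θ) * ∑ m, A i m * A m i * walkW A θ (k + 1) (fun y => if y = m then 1 else 0) i j := by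
    have p : ∀ m ∈ Finset.univ, A i m * walkW A θ (k + 2) (fun y => if y = i then 1 else 0) m j
        = A i m * A m i * walkW A θ (k + 1) (fun _ => 1) i j
          - (1 - θ) * (A i m * A m i * walkW A θ (k + 1) (fun y => if y = m then 1 else 0) i j) := by
      intro m _
      have r := recF A hA01 hAdiag θ (k + 1) i m j
      rw [n1] at r
      rw [r]
      ring
    rw [Finset.sum_congr rfl p, Finset.sum_sub_distrib, ← Finset.sum_mul, ← Finset.mul_sum]
  have e3 : ∑ m, A i m * A m i * walkW A θ (k + 1) (fun y => if y = m then 1 else 0) i j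
      = (∑ m, A i m * A m i * walkW A θ k (fun _ => 1) m j)
        - (1 - θ) * ∑ m, A i m * A m i * walkW A θ k (fun y => if y = i then 1 else 0) m j := by
    have p : ∀ m ∈ Finset.univ, A i m * A m i * walkW A θ (k + 1) (fun y => if y = m then 1 else 0) i j
        = A i m * A m i * walkW A θ k (fun _ => 1) m j
          - (1 - θ) * (A i m * A m i * walkW A θ k (fun y => if y = i then 1 else 0) m j) := by
      intro m _
      rw [recF A hA01 hAdiag θ k m i j]
      rcases hA01 i m with h | h <;> rw [h] <;> ring
    rw [Finset.sum_congr rfl p, Finset.sum_sub_distrib, ← Finset.mul_sum]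
  have e3' : ∑ m, A i m * A m i * walkW A θ k (fun y => if y = i then 1 else 0) m j
      = ∑ m, A i m * walkW A θ k (fun y => if y = i then 1 else 0) m j := by
    refine Finset.sum_congr rfl fun m _ => ?_
    match k with
    | 0 =>
      by_cases hmi : m = i
      · subst hmi
        rw [hAdiag m]
        ring
      · rw [walkW_zero]
        beta_reduce
        rw [if_neg hmi, ite_self]
        ring
    | (k' + 1) =>
      rw [recF A hA01 hAdiag θ k' i m j]
      rcases hA01 m i with h | h <;> rw [h] <;> ring
  have esplit : ∑ m, (A i m - A i m * A m i) * walkW A θ k (fun _ => 1) m j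
      = ∑ m, A i m * walkW A θ k (fun _ => 1) m j
        - ∑ m, A i m * A m i * walkW A θ k (fun _ => 1) m j := by
    rw [← Finset.sum_sub_distrib]
    exact Finset.sum_congr rfl fun m _ => by ring
  linear_combination e1 - (1 - θ) * e2 + (1 - θ)^2 * e3 - (1 - θ)^3 * e3'
    - (1 - θ)^2 * e4 + (1 - θ)^2 * esplit

lemma Q1val {n : ℕ} (A : Matrix (Fin n) (Fin n) ℝ)
    (hA01 : ∀ i j, A i j = 0 ∨ A i j = 1) (hAdiag : ∀ i, A i i = 0)
    (θ : ℝ) (a j : Fin n) :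
    walkW A θ 1 (fun _ => 1) a j = A a j := by
  classical
  rw [recQ A hA01 hAdiag θ 0 a j]
  have h1 : ∑ m, A a m * walkW A θ 0 (fun _ => (1:ℝ)) m j = A a j := by
    have p : ∀ m ∈ Finset.univ, A a m * walkW A θ 0 (fun _ => (1:ℝ)) m j
        = if m = j then A a m else 0 := by
      intro m _
      rw [walkW_zero]
      beta_reduce
      split_ifs <;> ring
    rw [Finset.sum_congr rfl p, Finset.sum_ite_eq' Finset.univ j (fun m => A a m),
      if_pos (Finset.mem_univ j)]
  have h2 : ∑ m, A a m * walkW A θ 0 (fun y => if y = a then (1:ℝ) else 0) m j = 0 := by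
    refine Finset.sum_eq_zero fun m _ => ?_
    rw [walkW_zero]
    beta_reduce
    by_cases hma : m = a
    · subst hma
      rw [hAdiag]
      ring
    · rw [if_neg hma, ite_self, mul_zero]
  rw [h1, h2]
  ring

lemma Q2val {n : ℕ} (A : Matrix (Fin n) (Fin n) ℝ)
    (hA01 : ∀ i j, A i j = 0 ∨ A i j = 1) (hAdiag : ∀ i, A i i = 0)
    (θ : ℝ) (a j : Fin n) :
    walkW A θ 2 (fun _ => 1) a j
      = (∑ m, A a m * A m j) - (1 - θ) * (if a = j then ∑ m, A a m * A m a else 0) := by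
  classical
  rw [recQ A hA01 hAdiag θ 1 a j]
  have h1 : ∑ m, A a m * walkW A θ 1 (fun _ => (1:ℝ)) m j = ∑ m, A a m * A m j := by
    refine Finset.sum_congr rfl fun m _ => ?_
    rw [Q1val A hA01 hAdiag θ m j]
  have h2 : ∑ m, A a m * walkW A θ 1 (fun y => if y = a then (1:ℝ) else 0) m j
      = if a = j then ∑ m, A a m * A m a else 0 := by
    by_cases haj : a = j
    · rw [if_pos haj]
      refine Finset.sum_congr rfl fun m _ => ?_
      rw [recF A hA01 hAdiag θ 0 a m j, walkW_zero, walkW_zero]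
      beta_reduce
      by_cases hma : m = a
      · subst hma
        rw [hAdiag]
        ring
      · rw [if_pos haj, if_pos haj, if_neg (fun h => hma h.symm)]
        ring
    · rw [if_neg haj]
      refine Finset.sum_eq_zero fun m _ => ?_
      rw [recF A hA01 hAdiag θ 0 a m j, walkW_zero, walkW_zero]
      beta_reduce
      rw [if_neg haj, if_neg haj]
      ring
  rw [h1, h2]

open scoped Classical in
lemma btdw_eq {n : ℕ} (A : Matrix (Fin n) (Fin n) ℝ) (θ : ℝ) (k : ℕ) (i j : Fin n) :
    btdwCount A θ k i j = walkW A θ k (fun _ => 1) i j := by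
  classical
  unfold btdwCount walkW wterm
  rw [Matrix.of_apply]
  refine Finset.sum_congr rfl fun w _ => ?_
  dsimp only
  split_ifs with h
  · ring
  · rfl

lemma mulZ {n : ℕ} (A : Matrix (Fin n) (Fin n) ℝ) (θ : ℝ)
    (X Y W : Matrix (Fin n) (Fin n) ℝ) :
    Zmat A θ * stack3 X Y W
      = stack3 Y W ((-((1 - θ) ^ 2) • (A - recipMat A)) * X
          + ((1 - θ) • ((1 - θ) • 1 - degDiag A)) * Y + A * W) := by
  classical
  unfold Zmat stack3
  ext i j
  rcases i with (i | i) | i <;>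
    simp [Matrix.mul_apply, Matrix.fromBlocks, Matrix.fromRows, Matrix.fromCols,
      Fintype.sum_sum_type, Matrix.add_apply, Matrix.one_apply, Finset.sum_ite_eq,
      Matrix.of_apply, Sum.elim, Finset.mul_sum, mul_assoc]

lemma recMat {n : ℕ} (A : Matrix (Fin n) (Fin n) ℝ)
    (hA01 : ∀ i j, A i j = 0 ∨ A i j = 1) (hAdiag : ∀ i, A i i = 0) (θ : ℝ) (k : ℕ) :
    (-((1 - θ) ^ 2) • (A - recipMat A)) * btdwCount A θ k
      + ((1 - θ) • ((1 - θ) • 1 - degDiag A)) * btdwCount A θ (k + 1)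
      + A * btdwCount A θ (k + 2) = btdwCount A θ (k + 3) := by
  classical
  ext i j
  rw [Matrix.add_apply, Matrix.add_apply, Matrix.mul_apply, Matrix.mul_apply, Matrix.mul_apply,
    btdw_eq]
  have h1 : ∑ m, ((-((1 - θ) ^ 2) : ℝ) • (A - recipMat A)) i m * btdwCount A θ k m j
      = (-((1 - θ) ^ 2)) * ∑ m, (A i m - A i m * A m i) * walkW A θ k (fun _ => 1) m j := by
    rw [Finset.mul_sum]
    refine Finset.sum_congr rfl fun m _ => ?_
    rw [btdw_eq]
    simp only [Matrix.smul_apply, Matrix.sub_apply, smul_eq_mul, recipMat, Matrix.of_apply]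
    ring
  have h2 : ∑ m, ((1 - θ) • ((1 - θ) • (1 : Matrix (Fin n) (Fin n) ℝ) - degDiag A)) i m
        * btdwCount A θ (k + 1) m j
      = (1 - θ) * ((1 - θ) - ∑ m, A i m * A m i) * walkW A θ (k + 1) (fun _ => 1) i j := by
    have p : ∀ m ∈ Finset.univ, ((1 - θ) • ((1 - θ) • (1 : Matrix (Fin n) (Fin n) ℝ)
          - degDiag A)) i m * btdwCount A θ (k + 1) m j
        = if i = m then
            (1 - θ) * ((1 - θ) - ∑ m', A i m' * A m' i) * walkW A θ (k + 1) (fun _ => 1) m j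
          else 0 := by
      intro m _
      simp only [Matrix.smul_apply, Matrix.sub_apply, smul_eq_mul, Matrix.one_apply, degDiag,
        Matrix.diagonal_apply, btdw_eq, Matrix.mul_apply]
      split_ifs with h
      · subst h
        ring
      · ring
    rw [Finset.sum_congr rfl p, Finset.sum_ite_eq Finset.univ i _, if_pos (Finset.mem_univ i)]
  have h3 : ∑ m, A i m * btdwCount A θ (k + 2) m j
      = ∑ m, A i m * walkW A θ (k + 2) (fun _ => 1) m j :=
    Finset.sum_congr rfl fun m _ => by rw [btdw_eq]
  rw [h1, h2, h3, recQ4 A hA01 hAdiag θ k i j]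
  ring

/-- For every `k ≥ 0`, `Z^k [I; A; A² − μD] = [q_k(A); q_{k+1}(A); q_{k+2}(A)]`. -/
theorem btdw_Z_power {n : ℕ} (hn : 1 ≤ n) (A : Matrix (Fin n) (Fin n) ℝ)
    (hA01 : ∀ i j, A i j = 0 ∨ A i j = 1) (hAdiag : ∀ i, A i i = 0)
    (θ : ℝ) (hθ0 : 0 ≤ θ) (hθ1 : θ ≤ 1) (μ : ℝ) (hμ : μ = 1 - θ) (k : ℕ) :
    Zmat A θ ^ k * stack3 1 A (A * A - μ • degDiag A) =
      stack3 (btdwCount A θ k) (btdwCount A θ (k + 1)) (btdwCount A θ (k + 2)) := by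
  classical
  subst hμ
  induction k with
  | zero =>
    rw [pow_zero, Matrix.one_mul]
    have hQ0 : btdwCount A θ 0 = 1 := by
      ext a j
      rw [btdw_eq, walkW_zero, Matrix.one_apply]
    have hQ1 : btdwCount A θ 1 = A := by
      ext a j
      rw [btdw_eq, Q1val A hA01 hAdiag θ a j]
    have hQ2 : btdwCount A θ 2 = A * A - (1 - θ) • degDiag A := by
      ext a j
      rw [btdw_eq, Q2val A hA01 hAdiag θ a j, Matrix.sub_apply, Matrix.mul_apply,
        Matrix.smul_apply, smul_eq_mul]
      unfold degDiag
      rw [Matrix.diagonal_apply]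
      by_cases h : a = j
      · rw [if_pos h, if_pos h, Matrix.mul_apply]
      · rw [if_neg h, if_neg h]
    rw [hQ0, hQ1, hQ2]
  | succ k ih =>
    rw [pow_succ', Matrix.mul_assoc, ih, mulZ]
    simp only [show k + 1 + 1 = k + 2 from rfl, show k + 1 + 2 = k + 3 from rfl]
    rw [recMat A hA01 hAdiag θ k]
end
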